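/- arXiv:1402.2242 — 5 statements merged into one kernel-verified Lean document; each statement's English description precedes it below -/
import Mathlib

section
/- For all s, t ∈ ℝ the map j_t is a well-defined linear isometry from L²(μ) into L²(λ⊗μ), and for all f, g ∈ L²(μ) one has ⟨j_s f, j_t g⟩_{L²(λ⊗μ)} = ∫_M e^{−|s−t| ω(k)} \overline{f(k)} g(k) dμ(k); equivalently, the adjoint relation j_s^* j_t f = e^{−|s−t|ω} f holds for all f ∈ L²(μ). -/
open MeasureTheory

/-- Nelson's embedding `j_t : L²(μ) → L²(λ⊗μ)`, written pointwise:
`(j_t f)(k₀,k) = π^{-1/2} e^{-i t k₀} ω(k)^{1/2} (ω(k)² + k₀²)^{-1/2} f(k)`,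
where the real prefactor is expressed as `√(ω(k) / (π (ω(k)² + k₀²)))`. -/
noncomputable def nelsonJ {M : Type*} (ω : M → ℝ) (t : ℝ) (f : M → ℂ) : ℝ × M → ℂ :=
  fun p =>
    (Real.sqrt (ω p.2 / (Real.pi * ((ω p.2) ^ 2 + p.1 ^ 2))) : ℂ) *
      Complex.exp (-(Complex.I * (t : ℂ) * (p.1 : ℂ))) * f p.2

section nelsonAux

open MeasureTheory Complex Set Filter
open scoped Real FourierTransform Topology

lemma aux_cexp_integrableOn_Ioi {s : ℂ} (hs : 0 < s.re) :
    IntegrableOn (fun x : ℝ => Complex.exp (-s * x)) (Ioi (0:ℝ)) := by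
  refine (exp_neg_integrableOn_Ioi 0 hs).mono' ?_ ?_
  · exact (Complex.continuous_exp.comp
      (continuous_const.mul Complex.continuous_ofReal)).aestronglyMeasurable
  · filter_upwards with x
    rw [Complex.norm_exp]
    simp [Complex.mul_re]

lemma aux_integral_Ioi_cexp {s : ℂ} (hs : 0 < s.re) :
    ∫ x : ℝ in Ioi (0:ℝ), Complex.exp (-s * x) = 1 / s := by
  have hs0 : s ≠ 0 := fun h => by simp [h] at hs
  have hderiv : ∀ x ∈ Ici (0:ℝ),
      HasDerivAt (fun x : ℝ => -Complex.exp (-s * x) / s) (Complex.exp (-s * x)) x := by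
    intro x _
    have h1 : HasDerivAt (fun y : ℂ => -Complex.exp (-s * y) / s)
        (Complex.exp (-s * (x:ℂ))) (x:ℂ) := by
      have h2 := (((hasDerivAt_id (x:ℂ)).const_mul (-s)).cexp).neg.div_const s
      refine h2.congr_deriv ?_
      field_simp
      rfl
    exact h1.comp_ofReal
  have htend : Tendsto (fun x : ℝ => -Complex.exp (-s * x) / s) atTop (𝓝 0) := by
    rw [tendsto_zero_iff_norm_tendsto_zero]
    have heq : (fun x : ℝ => ‖-Complex.exp (-s * x) / s‖)
        = fun x : ℝ => Real.exp (-s.re * x) / ‖s‖ := by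
      ext x
      rw [norm_div, norm_neg, Complex.norm_exp]
      congr 2
      simp [Complex.mul_re]
    rw [heq]
    have h3 : Tendsto (fun x : ℝ => Real.exp (-s.re * x)) atTop (𝓝 0) :=
      Real.tendsto_exp_atBot.comp
        (tendsto_id.const_mul_atTop_of_neg (neg_neg_iff_pos.2 hs))
    simpa using h3.div_const ‖s‖
  have := integral_Ioi_of_hasDerivAt_of_tendsto' hderiv (aux_cexp_integrableOn_Ioi hs) htend
  rw [this]
  simp [neg_div]

lemma aux_exp_abs_integrableOn_Ioi {c : ℝ} (hc : 0 < c) :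
    IntegrableOn (fun x : ℝ => Real.exp (-c * |x|)) (Ioi (0:ℝ)) := by
  refine (exp_neg_integrableOn_Ioi 0 hc).congr_fun ?_ measurableSet_Ioi
  intro x hx
  simp [abs_of_pos (show (0:ℝ) < x from hx)]

lemma aux_exp_abs_integrable {c : ℝ} (hc : 0 < c) :
    Integrable (fun x : ℝ => Real.exp (-c * |x|)) := by
  have h2 : IntegrableOn (fun x : ℝ => Real.exp (-c * |x|)) (Iic (0:ℝ)) := by
    rw [← (Measure.measurePreserving_neg (volume : Measure ℝ)).integrableOn_comp_preimage
        (Homeomorph.neg ℝ).measurableEmbedding]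
    simp only [Function.comp_def, abs_neg, neg_preimage, neg_Iic, neg_zero]
    exact (integrableOn_Ici_iff_integrableOn_Ioi (by simp)).2 (aux_exp_abs_integrableOn_Ioi hc)
  have := h2.union (aux_exp_abs_integrableOn_Ioi hc)
  rwa [Iic_union_Ioi, integrableOn_univ] at this

lemma aux_cexp_abs_integrable {c : ℝ} (hc : 0 < c) (b : ℝ) :
    Integrable (fun x : ℝ => Complex.exp ((b * x : ℝ) * Complex.I)
      * (Real.exp (-c * |x|) : ℂ)) := by
  refine (aux_exp_abs_integrable hc).mono' ?_ ?_
  · apply Continuous.aestronglyMeasurable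
    exact (Complex.continuous_exp.comp
      ((Complex.continuous_ofReal.comp ((continuous_const.mul continuous_id))).mul
        continuous_const)).mul
      (Complex.continuous_ofReal.comp
        (Real.continuous_exp.comp (continuous_const.mul continuous_abs)))
  · filter_upwards with x
    rw [norm_mul]
    simp [Complex.norm_exp, Complex.mul_re]

lemma aux_fourier_exp_abs {c : ℝ} (hc : 0 < c) (b : ℝ) :
    ∫ x : ℝ, Complex.exp ((b * x : ℝ) * Complex.I) * (Real.exp (-c * |x|) : ℂ)
      = 2 * c / (c ^ 2 + b ^ 2) := by
  have hint := aux_cexp_abs_integrable hc b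
  have h1 : (c : ℂ) - b * Complex.I ≠ 0 := by
    intro h
    have := congrArg Complex.re h
    simp [hc.ne'] at this
  have h2 : (c : ℂ) + b * Complex.I ≠ 0 := by
    intro h
    have := congrArg Complex.re h
    simp [hc.ne'] at this
  rw [← intervalIntegral.integral_Iic_add_Ioi hint.integrableOn hint.integrableOn]
  have hIoi : ∫ x : ℝ in Ioi (0:ℝ),
      Complex.exp ((b * x : ℝ) * Complex.I) * (Real.exp (-c * |x|) : ℂ)
      = 1 / ((c : ℂ) - b * Complex.I) := by
    rw [← aux_integral_Ioi_cexp (s := (c : ℂ) - b * Complex.I) (by simp [hc])]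
    refine setIntegral_congr_fun measurableSet_Ioi (fun x hx => ?_)
    rw [abs_of_pos hx, Complex.ofReal_exp, ← Complex.exp_add]
    congr 1
    push_cast
    ring
  have hIic : ∫ x : ℝ in Iic (0:ℝ),
      Complex.exp ((b * x : ℝ) * Complex.I) * (Real.exp (-c * |x|) : ℂ)
      = 1 / ((c : ℂ) + b * Complex.I) := by
    rw [show (0:ℝ) = -0 by norm_num, ← integral_comp_neg_Ioi]
    rw [← aux_integral_Ioi_cexp (s := (c : ℂ) + b * Complex.I) (by simp [hc])]
    refine setIntegral_congr_fun measurableSet_Ioi (fun x hx => ?_)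
    rw [abs_neg, abs_of_pos hx, Complex.ofReal_exp, ← Complex.exp_add]
    congr 1
    push_cast
    ring
  rw [hIic, hIoi, div_add_div _ _ h2 h1]
  rw [show ((c:ℂ) + b * Complex.I) * ((c:ℂ) - b * Complex.I) = c^2 + b^2 by
    ring_nf; rw [Complex.I_sq]; ring]
  congr 1
  ring

lemma aux_poisson_eq {c : ℝ} (hc : 0 < c) :
    (fun x : ℝ => c / (π * (c ^ 2 + x ^ 2)))
      = fun x : ℝ => (1 / (π * c)) * (1 + (c⁻¹ * x) ^ 2)⁻¹ := by
  ext x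
  have hπ : (π : ℝ) ≠ 0 := Real.pi_ne_zero
  field_simp

lemma aux_integrable_poisson {c : ℝ} (hc : 0 < c) :
    Integrable (fun x : ℝ => c / (π * (c ^ 2 + x ^ 2))) := by
  rw [aux_poisson_eq hc]
  exact ((integrable_comp_mul_left_iff (fun y : ℝ => (1 + y ^ 2)⁻¹)
    (inv_ne_zero hc.ne')).2 integrable_inv_one_add_sq).const_mul _

lemma aux_integral_poisson {c : ℝ} (hc : 0 < c) :
    ∫ x : ℝ, c / (π * (c ^ 2 + x ^ 2)) = 1 := by
  rw [aux_poisson_eq hc, MeasureTheory.integral_const_mul,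
    Measure.integral_comp_mul_left (fun y : ℝ => (1 + y ^ 2)⁻¹) c⁻¹,
    integral_univ_inv_one_add_sq]
  rw [abs_of_pos (by positivity : (0:ℝ) < c⁻¹⁻¹)]
  field_simp
  ring

lemma aux_fourier_g {c : ℝ} (hc : 0 < c) (w : ℝ) :
    𝓕 (fun x : ℝ => (Real.exp (-c * |x|) : ℂ)) w
      = ((2 * c / (c ^ 2 + (2 * π * w) ^ 2) : ℝ) : ℂ) := by
  rw [Real.fourier_real_eq_integral_exp_smul]
  have := aux_fourier_exp_abs hc (-(2 * π * w))
  rw [show ∫ v : ℝ, Complex.exp ((-2 * π * v * w : ℝ) * Complex.I)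
        • (Real.exp (-c * |v|) : ℂ)
      = ∫ x : ℝ, Complex.exp ((-(2 * π * w) * x : ℝ) * Complex.I)
        * (Real.exp (-c * |x|) : ℂ) by
    congr 1; ext v; rw [smul_eq_mul]; ring_nf]
  rw [this]
  push_cast
  ring

lemma aux_inversion {c : ℝ} (hc : 0 < c) (a : ℝ) :
    ∫ v : ℝ, Complex.exp ((2 * π * v * a : ℝ) * Complex.I)
        * ((2 * c / (c ^ 2 + (2 * π * v) ^ 2) : ℝ) : ℂ)
      = (Real.exp (-c * |a|) : ℂ) := by
  set g : ℝ → ℂ := fun x => (Real.exp (-c * |x|) : ℂ) with hg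
  have hg_int : Integrable g := (aux_exp_abs_integrable hc).ofReal
  have h𝓕 : 𝓕 g = fun w : ℝ => ((2 * c / (c ^ 2 + (2 * π * w) ^ 2) : ℝ) : ℂ) :=
    funext fun w => aux_fourier_g hc w
  have heq : (fun w : ℝ => 2 * c / (c ^ 2 + (2 * π * w) ^ 2))
      = fun w : ℝ => (2 * π) * (c / (π * (c ^ 2 + (2 * π * w) ^ 2))) := by
    ext w
    have h3 : (0:ℝ) < c ^ 2 + (2 * π * w) ^ 2 := by positivity
    field_simp
  have hreal : Integrable (fun w : ℝ => 2 * c / (c ^ 2 + (2 * π * w) ^ 2)) := by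
    rw [heq]
    exact ((integrable_comp_mul_left_iff (fun y : ℝ => c / (π * (c ^ 2 + y ^ 2)))
      (by positivity : (2 * π : ℝ) ≠ 0)).2 (aux_integrable_poisson hc)).const_mul _
  have h𝓕int : Integrable (𝓕 g) := by
    rw [h𝓕]
    exact hreal.ofReal
  have hcont : Continuous g :=
    Complex.continuous_ofReal.comp
      (Real.continuous_exp.comp (continuous_const.mul continuous_abs))
  have h0 := hg_int.fourierInv_fourier_eq h𝓕int (hcont.continuousAt (x := a))
  rw [Real.fourierInv_eq_fourier_neg, h𝓕,
    Real.fourier_real_eq_integral_exp_smul] at h0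
  have harg : ∀ v : ℝ, (-2 * π * v * -a : ℝ) = 2 * π * v * a := fun v => by ring
  simp only [smul_eq_mul, harg, hg] at h0
  exact h0

lemma aux_poisson_fourier {c : ℝ} (hc : 0 < c) (a : ℝ) :
    ∫ x : ℝ, ((c / (π * (c ^ 2 + x ^ 2)) : ℝ) : ℂ) * Complex.exp (Complex.I * a * x)
      = (Real.exp (-|a| * c) : ℂ) := by
  set G : ℝ → ℂ :=
    fun y => ((c / (π * (c ^ 2 + y ^ 2)) : ℝ) : ℂ) * Complex.exp (Complex.I * a * y) with hG
  have hscale := Measure.integral_comp_mul_left G (2 * π)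
  have h1 : (fun x : ℝ => G (2 * π * x))
      = fun v => (((2 * π)⁻¹ : ℝ) : ℂ) * (Complex.exp ((2 * π * v * a : ℝ) * Complex.I)
          * ((2 * c / (c ^ 2 + (2 * π * v) ^ 2) : ℝ) : ℂ)) := by
    ext v
    simp only [hG]
    rw [show Complex.I * (a : ℂ) * ((2 * π * v : ℝ) : ℂ)
      = ((2 * π * v * a : ℝ) : ℂ) * Complex.I by push_cast; ring]
    have hr : c / (π * (c ^ 2 + (2 * π * v) ^ 2))
        = (2 * π)⁻¹ * (2 * c / (c ^ 2 + (2 * π * v) ^ 2)) := by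
      have h3 : (0:ℝ) < c ^ 2 + (2 * π * v) ^ 2 := by positivity
      field_simp
    rw [hr, Complex.ofReal_mul]
    ring
  rw [h1, MeasureTheory.integral_const_mul, aux_inversion hc a] at hscale
  have h4 : |(2 * π : ℝ)⁻¹| = (2 * π)⁻¹ := abs_of_pos (by positivity)
  rw [h4] at hscale
  have h5 : ((2 * π : ℝ)) • ((((2 * π)⁻¹ : ℝ) : ℂ) * (Real.exp (-c * |a|) : ℂ))
      = ((2 * π : ℝ)) • (((2 * π : ℝ)⁻¹) • ∫ y, G y) := by rw [← hscale, Complex.real_smul]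
  rw [smul_smul, mul_inv_cancel₀ (by positivity : (2 * π : ℝ) ≠ 0), one_smul] at h5
  rw [← h5, Complex.real_smul, ← Complex.ofReal_mul, ← Complex.ofReal_mul]
  congr 1
  rw [← mul_assoc, mul_inv_cancel₀ (by positivity : (2 * π : ℝ) ≠ 0), one_mul]
  ring_nf


end nelsonAux

/-- For all `s, t ∈ ℝ`, `j_t` maps `L²(μ)` isometrically into `L²(λ⊗μ)`,
and `⟨j_s f, j_t g⟩ = ∫_M e^{-|s-t| ω(k)} conj (f k) * g k dμ(k)`. -/
theorem statement1 {M : Type*} [MeasurableSpace M] (μ : Measure M) [SigmaFinite μ]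
    (ω : M → ℝ) (hω : Measurable ω) (hωpos : ∀ k, 0 < ω k)
    (s t : ℝ) (f g : M → ℂ) (hf : MemLp f 2 μ) (hg : MemLp g 2 μ) :
    MemLp (nelsonJ ω t f) 2 ((volume : Measure ℝ).prod μ) ∧
    (∫ p, ‖nelsonJ ω t f p‖ ^ 2 ∂((volume : Measure ℝ).prod μ)) =
      (∫ k, ‖f k‖ ^ 2 ∂μ) ∧
    (∫ p, (starRingEnd ℂ) (nelsonJ ω s f p) * nelsonJ ω t g p
        ∂((volume : Measure ℝ).prod μ)) =
      ∫ k, ((Real.exp (-|s - t| * ω k) : ℝ) : ℂ) * (starRingEnd ℂ) (f k) * g k ∂μ := by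
  have hQpos : ∀ (x : ℝ) (k : M), 0 < ω k / (Real.pi * (ω k ^ 2 + x ^ 2)) := by
    intro x k
    have h1 := hωpos k
    have h2 := Real.pi_pos
    positivity
  -- measurability of the prefactor
  have hQm : Measurable fun p : ℝ × M => ω p.2 / (Real.pi * (ω p.2 ^ 2 + p.1 ^ 2)) :=
    (hω.comp measurable_snd).div
      ((((hω.comp measurable_snd).pow_const 2).add
        ((measurable_fst).pow_const 2)).const_mul Real.pi)
  have hasm : ∀ (r : ℝ) (h : M → ℂ), AEStronglyMeasurable h μ →
      AEStronglyMeasurable (nelsonJ ω r h) ((volume : Measure ℝ).prod μ) := by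
    intro r h hh
    have h1 : Measurable (fun p : ℝ × M =>
        ((Real.sqrt (ω p.2 / (Real.pi * ((ω p.2) ^ 2 + p.1 ^ 2))) : ℝ) : ℂ) *
          Complex.exp (-(Complex.I * (r : ℂ) * (p.1 : ℂ)))) := by
      apply Measurable.mul
      · exact Complex.measurable_ofReal.comp (Real.continuous_sqrt.measurable.comp hQm)
      · exact Complex.measurable_exp.comp
          (((Complex.measurable_ofReal.comp measurable_fst).const_mul
            (Complex.I * (r : ℂ))).neg)
    have h2 : nelsonJ ω r h = fun p : ℝ × M =>
        (((Real.sqrt (ω p.2 / (Real.pi * ((ω p.2) ^ 2 + p.1 ^ 2))) : ℝ) : ℂ) *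
          Complex.exp (-(Complex.I * (r : ℂ) * (p.1 : ℂ)))) * h p.2 := by
      funext p
      simp [nelsonJ, mul_assoc]
    rw [h2]
    exact h1.aestronglyMeasurable.mul hh.comp_snd
  -- pointwise norm formula
  have hnorm1 : ∀ (r : ℝ) (h : M → ℂ) (x : ℝ) (k : M),
      ‖nelsonJ ω r h (x, k)‖
        = Real.sqrt (ω k / (Real.pi * (ω k ^ 2 + x ^ 2))) * ‖h k‖ := by
    intro r h x k
    rw [show nelsonJ ω r h (x, k)
      = ((Real.sqrt (ω k / (Real.pi * (ω k ^ 2 + x ^ 2))) : ℝ) : ℂ) *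
        Complex.exp (-(Complex.I * (r : ℂ) * (x : ℂ))) * h k from rfl]
    rw [norm_mul, norm_mul, Complex.norm_exp]
    have h3 : (-(Complex.I * (r : ℂ) * (x : ℂ))).re = 0 := by simp
    rw [h3, Real.exp_zero, mul_one, Complex.norm_real, Real.norm_eq_abs,
      _root_.abs_of_nonneg (Real.sqrt_nonneg _)]
  have hnormsq : ∀ (r : ℝ) (h : M → ℂ) (x : ℝ) (k : M),
      ‖nelsonJ ω r h (x, k)‖ ^ 2
        = ω k / (Real.pi * (ω k ^ 2 + x ^ 2)) * ‖h k‖ ^ 2 := by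
    intro r h x k
    rw [hnorm1, mul_pow, Real.sq_sqrt (hQpos x k).le]
  -- integrability of the squared norm of nelsonJ ω t f
  have hsqint : ∀ (h : M → ℂ), MemLp h 2 μ → Integrable
      (fun p : ℝ × M => ‖nelsonJ ω t h p‖ ^ 2) ((volume : Measure ℝ).prod μ) := by
    intro h hh
    have hA : AEStronglyMeasurable (fun p : ℝ × M => ‖nelsonJ ω t h p‖ ^ 2)
        ((volume : Measure ℝ).prod μ) := (hasm t h hh.1).norm.pow 2
    refine (integrable_prod_iff' hA).2 ⟨?_, ?_⟩
    · refine ae_of_all _ fun k => ?_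
      have : (fun x : ℝ => ‖nelsonJ ω t h (x, k)‖ ^ 2)
          = fun x : ℝ => ω k / (Real.pi * (ω k ^ 2 + x ^ 2)) * ‖h k‖ ^ 2 :=
        funext fun x => hnormsq t h x k
      rw [this]
      exact (aux_integrable_poisson (hωpos k)).mul_const _
    · have : (fun k => ∫ x : ℝ, ‖(‖nelsonJ ω t h (x, k)‖ ^ 2 : ℝ)‖)
          = fun k => ‖h k‖ ^ 2 := by
        funext k
        have e1 : (fun x : ℝ => ‖(‖nelsonJ ω t h (x, k)‖ ^ 2 : ℝ)‖)
            = fun x : ℝ => ω k / (Real.pi * (ω k ^ 2 + x ^ 2)) * ‖h k‖ ^ 2 := by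
          funext x
          rw [Real.norm_eq_abs, _root_.abs_of_nonneg (sq_nonneg _), hnormsq]
        rw [e1, MeasureTheory.integral_mul_const, aux_integral_poisson (hωpos k), one_mul]
      rw [this]
      exact (memLp_two_iff_integrable_sq_norm hh.1).1 hh
  have hmem : MemLp (nelsonJ ω t f) 2 ((volume : Measure ℝ).prod μ) :=
    (memLp_two_iff_integrable_sq_norm (hasm t f hf.1)).2 (hsqint f hf)
  refine ⟨hmem, ?_, ?_⟩
  · rw [MeasureTheory.integral_prod_symm _ (hsqint f hf)]
    refine integral_congr_ae (ae_of_all _ fun k => ?_)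
    show (∫ x : ℝ, ‖nelsonJ ω t f (x, k)‖ ^ 2) = ‖f k‖ ^ 2
    have e1 : (fun x : ℝ => ‖nelsonJ ω t f (x, k)‖ ^ 2)
        = fun x : ℝ => ω k / (Real.pi * (ω k ^ 2 + x ^ 2)) * ‖f k‖ ^ 2 :=
      funext fun x => hnormsq t f x k
    rw [e1, MeasureTheory.integral_mul_const, aux_integral_poisson (hωpos k), one_mul]
  · -- the inner-product identity
    have hH : ∀ (x : ℝ) (k : M),
        (starRingEnd ℂ) (nelsonJ ω s f (x, k)) * nelsonJ ω t g (x, k)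
          = ((ω k / (Real.pi * (ω k ^ 2 + x ^ 2)) : ℝ) : ℂ) *
            Complex.exp (Complex.I * ((s - t : ℝ) : ℂ) * (x : ℂ)) *
            ((starRingEnd ℂ) (f k) * g k) := by
      intro x k
      have e1 : (starRingEnd ℂ) (nelsonJ ω s f (x, k))
          = ((Real.sqrt (ω k / (Real.pi * (ω k ^ 2 + x ^ 2))) : ℝ) : ℂ) *
            Complex.exp (Complex.I * (s : ℂ) * (x : ℂ)) * (starRingEnd ℂ) (f k) := by
        rw [show nelsonJ ω s f (x, k)
          = ((Real.sqrt (ω k / (Real.pi * (ω k ^ 2 + x ^ 2))) : ℝ) : ℂ) *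
            Complex.exp (-(Complex.I * (s : ℂ) * (x : ℂ))) * f k from rfl]
        rw [map_mul, map_mul, Complex.conj_ofReal, ← Complex.exp_conj]
        congr 2
        rw [map_neg, map_mul, map_mul, Complex.conj_I, Complex.conj_ofReal,
          Complex.conj_ofReal]
        ring
      rw [e1, show nelsonJ ω t g (x, k)
        = ((Real.sqrt (ω k / (Real.pi * (ω k ^ 2 + x ^ 2))) : ℝ) : ℂ) *
          Complex.exp (-(Complex.I * (t : ℂ) * (x : ℂ))) * g k from rfl]
      rw [show (((Real.sqrt (ω k / (Real.pi * (ω k ^ 2 + x ^ 2))) : ℝ) : ℂ) *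
            Complex.exp (Complex.I * (s : ℂ) * (x : ℂ)) * (starRingEnd ℂ) (f k)) *
          (((Real.sqrt (ω k / (Real.pi * (ω k ^ 2 + x ^ 2))) : ℝ) : ℂ) *
            Complex.exp (-(Complex.I * (t : ℂ) * (x : ℂ))) * g k)
        = (((Real.sqrt (ω k / (Real.pi * (ω k ^ 2 + x ^ 2))) : ℝ) : ℂ) *
            ((Real.sqrt (ω k / (Real.pi * (ω k ^ 2 + x ^ 2))) : ℝ) : ℂ)) *
          (Complex.exp (Complex.I * (s : ℂ) * (x : ℂ)) *
            Complex.exp (-(Complex.I * (t : ℂ) * (x : ℂ)))) *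
          ((starRingEnd ℂ) (f k) * g k) from by ring]
      rw [← Complex.ofReal_mul, Real.mul_self_sqrt (hQpos x k).le, ← Complex.exp_add]
      congr 2
      push_cast
      ring
    have hHaesm : AEStronglyMeasurable
        (fun p : ℝ × M => (starRingEnd ℂ) (nelsonJ ω s f p) * nelsonJ ω t g p)
        ((volume : Measure ℝ).prod μ) :=
      (continuous_star.comp_aestronglyMeasurable (hasm s f hf.1)).mul (hasm t g hg.1)
    have hHnorm : ∀ (x : ℝ) (k : M),
        ‖(starRingEnd ℂ) (nelsonJ ω s f (x, k)) * nelsonJ ω t g (x, k)‖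
          = ω k / (Real.pi * (ω k ^ 2 + x ^ 2)) * (‖f k‖ * ‖g k‖) := by
      intro x k
      rw [norm_mul, RCLike.norm_conj, hnorm1, hnorm1]
      rw [show Real.sqrt (ω k / (Real.pi * (ω k ^ 2 + x ^ 2))) * ‖f k‖ *
          (Real.sqrt (ω k / (Real.pi * (ω k ^ 2 + x ^ 2))) * ‖g k‖)
        = (Real.sqrt (ω k / (Real.pi * (ω k ^ 2 + x ^ 2))) *
            Real.sqrt (ω k / (Real.pi * (ω k ^ 2 + x ^ 2)))) * (‖f k‖ * ‖g k‖) from by ring]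
      rw [Real.mul_self_sqrt (hQpos x k).le]
    have hfg : Integrable (fun k => ‖f k‖ * ‖g k‖) μ := by
      have h1 := (memLp_two_iff_integrable_sq_norm hf.1).1 hf
      have h2 := (memLp_two_iff_integrable_sq_norm hg.1).1 hg
      refine ((h1.add h2).div_const 2).mono' (hf.1.norm.mul hg.1.norm) ?_
      filter_upwards with k
      simp only [Pi.add_apply]
      rw [Real.norm_eq_abs, _root_.abs_of_nonneg (by positivity : (0:ℝ) ≤ ‖f k‖ * ‖g k‖)]
      nlinarith [sq_nonneg (‖f k‖ - ‖g k‖)]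
    have hHint : Integrable
        (fun p : ℝ × M => (starRingEnd ℂ) (nelsonJ ω s f p) * nelsonJ ω t g p)
        ((volume : Measure ℝ).prod μ) := by
      refine (integrable_prod_iff' hHaesm).2 ⟨?_, ?_⟩
      · refine ae_of_all _ fun k => ?_
        have e1 : (fun x : ℝ =>
            (starRingEnd ℂ) (nelsonJ ω s f (x, k)) * nelsonJ ω t g (x, k))
            = fun x : ℝ => ((ω k / (Real.pi * (ω k ^ 2 + x ^ 2)) : ℝ) : ℂ) *
              Complex.exp (Complex.I * ((s - t : ℝ) : ℂ) * (x : ℂ)) *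
              ((starRingEnd ℂ) (f k) * g k) := funext fun x => hH x k
        rw [e1]
        refine Integrable.mul_const ?_ _
        refine ((aux_integrable_poisson (hωpos k))).mono' ?_ ?_
        · apply Continuous.aestronglyMeasurable
          refine Continuous.mul ?_ ?_
          · refine Complex.continuous_ofReal.comp ?_
            refine continuous_const.div ?_ fun x => ?_
            · fun_prop
            · have := hQpos x k
              intro hzero
              rw [hzero] at this
              simp [div_zero] at this
              -- contradiction: division by zero
          · exact Complex.continuous_exp.comp (by fun_prop)
        · filter_upwards with x
          rw [norm_mul, Complex.norm_real, Real.norm_eq_abs, _root_.abs_of_pos (hQpos x k),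
            Complex.norm_exp]
          have h3 : (Complex.I * ((s - t : ℝ) : ℂ) * (x : ℂ)).re = 0 := by simp
          rw [h3, Real.exp_zero, mul_one]
      · have e2 : (fun k => ∫ x : ℝ,
            ‖(starRingEnd ℂ) (nelsonJ ω s f (x, k)) * nelsonJ ω t g (x, k)‖)
            = fun k => ‖f k‖ * ‖g k‖ := by
          funext k
          have e1 : (fun x : ℝ =>
              ‖(starRingEnd ℂ) (nelsonJ ω s f (x, k)) * nelsonJ ω t g (x, k)‖)
              = fun x : ℝ => ω k / (Real.pi * (ω k ^ 2 + x ^ 2)) * (‖f k‖ * ‖g k‖) :=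
            funext fun x => hHnorm x k
          rw [e1, MeasureTheory.integral_mul_const, aux_integral_poisson (hωpos k), one_mul]
        rw [e2]
        exact hfg
    rw [MeasureTheory.integral_prod_symm _ hHint]
    refine integral_congr_ae (ae_of_all _ fun k => ?_)
    show (∫ x : ℝ, (starRingEnd ℂ) (nelsonJ ω s f (x, k)) * nelsonJ ω t g (x, k))
      = ((Real.exp (-|s - t| * ω k) : ℝ) : ℂ) * (starRingEnd ℂ) (f k) * g k
    have e1 : (fun x : ℝ =>
        (starRingEnd ℂ) (nelsonJ ω s f (x, k)) * nelsonJ ω t g (x, k))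
        = fun x : ℝ => (((ω k / (Real.pi * (ω k ^ 2 + x ^ 2)) : ℝ) : ℂ) *
          Complex.exp (Complex.I * ((s - t : ℝ) : ℂ) * (x : ℂ))) *
          ((starRingEnd ℂ) (f k) * g k) := by
      funext x
      rw [hH x k]
    rw [e1, MeasureTheory.integral_mul_const, aux_poisson_fourier (hωpos k) (s - t)]
    ring
end

section
/- For every f ∈ L²(μ), the map ℝ ∋ t ↦ j_t f ∈ L²(λ⊗μ) is continuous (i.e., the family of isometries (j_t)_{t∈ℝ} is strongly continuous). -/
open MeasureTheory

open Real Filter ENNReal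

private lemma nelson_cauchy_integrable {a : ℝ} (ha : 0 < a) :
    Integrable (fun x : ℝ => a / (Real.pi * (a ^ 2 + x ^ 2))) := by
  have heq : (fun x : ℝ => a / (Real.pi * (a ^ 2 + x ^ 2)))
      = fun x : ℝ => (Real.pi * a)⁻¹ * (1 + (x / a) ^ 2)⁻¹ := by
    funext x
    have h1 : a ^ 2 + x ^ 2 = a ^ 2 * (1 + (x / a) ^ 2) := by field_simp
    rw [h1]
    have hpi := Real.pi_pos
    field_simp
  rw [heq]
  exact (integrable_inv_one_add_sq.comp_div ha.ne').const_mul _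

private lemma nelson_cauchy_integral {a : ℝ} (ha : 0 < a) :
    ∫ x : ℝ, a / (Real.pi * (a ^ 2 + x ^ 2)) = 1 := by
  have heq : (fun x : ℝ => a / (Real.pi * (a ^ 2 + x ^ 2)))
      = fun x : ℝ => (Real.pi * a)⁻¹ * (1 + (x / a) ^ 2)⁻¹ := by
    funext x
    have h1 : a ^ 2 + x ^ 2 = a ^ 2 * (1 + (x / a) ^ 2) := by field_simp
    rw [h1]
    have hpi := Real.pi_pos
    field_simp
  rw [heq, MeasureTheory.integral_const_mul]
  have h2 : ∫ x : ℝ, (1 + (x / a) ^ 2)⁻¹ = |a| • ∫ y : ℝ, (1 + y ^ 2)⁻¹ :=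
    MeasureTheory.Measure.integral_comp_div (fun y : ℝ => (1 + y ^ 2)⁻¹) a
  rw [h2, integral_univ_inv_one_add_sq, abs_of_pos ha, smul_eq_mul]
  have hpi := Real.pi_pos
  field_simp

private lemma nelson_cauchy_lintegral {a : ℝ} (ha : 0 < a) :
    ∫⁻ x : ℝ, ENNReal.ofReal (a / (Real.pi * (a ^ 2 + x ^ 2))) = 1 := by
  rw [← MeasureTheory.ofReal_integral_eq_lintegral_ofReal (nelson_cauchy_integrable ha)
    (Filter.Eventually.of_forall fun x => by positivity), nelson_cauchy_integral ha,
    ENNReal.ofReal_one]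

private lemma nelson_ofReal_norm_sq (x : ℂ) :
    ENNReal.ofReal (‖x‖ ^ 2) = (‖x‖₊ : ℝ≥0∞) ^ (2 : ℝ) := by
  rw [← Real.rpow_two, ← ENNReal.ofReal_rpow_of_nonneg (norm_nonneg x) (by norm_num),
    ofReal_norm, enorm_eq_nnnorm]

private lemma nelson_core {M : Type*} [MeasurableSpace M] (μ : Measure M) [SigmaFinite μ]
    (ω : M → ℝ) (hω : Measurable ω) (hωpos : ∀ k, 0 < ω k)
    (f : M → ℂ) (hfm : StronglyMeasurable f) (hf2 : eLpNorm f 2 μ < ∞) :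
    (∀ t : ℝ, MemLp (nelsonJ ω t f) 2 ((volume : Measure ℝ).prod μ)) ∧
      ∀ t : ℝ, Tendsto (fun s : ℝ =>
          eLpNorm (nelsonJ ω s f - nelsonJ ω t f) 2 ((volume : Measure ℝ).prod μ))
        (nhds t) (nhds 0) := by
  set ν : Measure (ℝ × M) := (volume : Measure ℝ).prod μ with hν
  set c : ℝ × M → ℝ := fun p => ω p.2 / (Real.pi * ((ω p.2) ^ 2 + p.1 ^ 2)) with hc
  have hc_nonneg : ∀ p, 0 ≤ c p := fun p => div_nonneg (hωpos p.2).le (by positivity)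
  have hc_meas : Measurable c :=
    (hω.comp measurable_snd).div
      ((((hω.comp measurable_snd).pow_const 2).add ((measurable_fst).pow_const 2)).const_mul
        Real.pi)
  have hmeasJ : ∀ t : ℝ, Measurable (nelsonJ ω t f) := by
    intro t
    unfold nelsonJ
    apply Measurable.mul
    apply Measurable.mul
    · exact Complex.measurable_ofReal.comp hc_meas.sqrt
    · exact (Complex.continuous_exp.measurable).comp
        (((Complex.measurable_ofReal.comp measurable_fst).const_mul (Complex.I * t)).neg)
    · exact hfm.measurable.comp measurable_snd
  have hnorm : ∀ (t : ℝ) (p : ℝ × M), ‖nelsonJ ω t f p‖ = Real.sqrt (c p) * ‖f p.2‖ := by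
    intro t p
    unfold nelsonJ
    rw [norm_mul, norm_mul, Complex.norm_real, Real.norm_eq_abs,
      abs_of_nonneg (Real.sqrt_nonneg _), Complex.norm_exp]
    simp
    exact Or.inl rfl
  have hGmeas : Measurable fun p : ℝ × M => ENNReal.ofReal (c p * ‖f p.2‖ ^ 2) :=
    (hc_meas.mul (((hfm.measurable.comp measurable_snd).norm).pow_const 2)).ennreal_ofReal
  have hGeq : ∫⁻ p, ENNReal.ofReal (c p * ‖f p.2‖ ^ 2) ∂ν
      = ∫⁻ k, ENNReal.ofReal (‖f k‖ ^ 2) ∂μ := by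
    rw [MeasureTheory.lintegral_prod_symm _ hGmeas.aemeasurable]
    refine lintegral_congr fun k => ?_
    have hinner : ∀ x : ℝ,
        ENNReal.ofReal (c (x, k) * ‖f k‖ ^ 2)
          = ENNReal.ofReal (ω k / (Real.pi * ((ω k) ^ 2 + x ^ 2)))
              * ENNReal.ofReal (‖f k‖ ^ 2) :=
      fun x => ENNReal.ofReal_mul (hc_nonneg _)
    simp_rw [hinner]
    rw [lintegral_mul_const _ (by fun_prop), nelson_cauchy_lintegral (hωpos k), one_mul]
  have hGfin : ∫⁻ p, ENNReal.ofReal (c p * ‖f p.2‖ ^ 2) ∂ν < ∞ := by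
    rw [hGeq]
    simp_rw [nelson_ofReal_norm_sq]
    have h := lintegral_rpow_enorm_lt_top_of_eLpNorm_lt_top (f := f) (p := 2)
      (by norm_num) (by norm_num) hf2
    simpa [enorm_eq_nnnorm] using h
  have hpow : ∀ (t : ℝ) (p : ℝ × M),
      ((‖nelsonJ ω t f p‖₊ : ℝ≥0∞)) ^ (2 : ℝ) = ENNReal.ofReal (c p * ‖f p.2‖ ^ 2) := by
    intro t p
    rw [← nelson_ofReal_norm_sq, hnorm t p, mul_pow, Real.sq_sqrt (hc_nonneg p)]
  have hmem : ∀ t : ℝ, MemLp (nelsonJ ω t f) 2 ν := by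
    intro t
    refine ⟨(hmeasJ t).aestronglyMeasurable, ?_⟩
    rw [eLpNorm_lt_top_iff_lintegral_rpow_enorm_lt_top (by norm_num) (by norm_num)]
    simp only [ENNReal.toReal_ofNat]
    simp_rw [enorm_eq_nnnorm, hpow t]
    exact hGfin
  refine ⟨hmem, fun t => ?_⟩
  -- dominated convergence
  have hFmeas : ∀ s : ℝ, Measurable fun p : ℝ × M =>
      ENNReal.ofReal (‖nelsonJ ω s f p - nelsonJ ω t f p‖ ^ 2) := fun s =>
    ((((hmeasJ s).sub (hmeasJ t)).norm).pow_const 2).ennreal_ofReal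
  have hbound : ∀ s : ℝ, ∀ p : ℝ × M,
      ENNReal.ofReal (‖nelsonJ ω s f p - nelsonJ ω t f p‖ ^ 2)
        ≤ ENNReal.ofReal (4 * (c p * ‖f p.2‖ ^ 2)) := by
    intro s p
    apply ENNReal.ofReal_le_ofReal
    have h1 := norm_sub_le (nelsonJ ω s f p) (nelsonJ ω t f p)
    rw [hnorm s p, hnorm t p] at h1
    have hs := Real.sq_sqrt (hc_nonneg p)
    calc ‖nelsonJ ω s f p - nelsonJ ω t f p‖ ^ 2
        ≤ (Real.sqrt (c p) * ‖f p.2‖ + Real.sqrt (c p) * ‖f p.2‖) ^ 2 :=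
          pow_le_pow_left₀ (norm_nonneg _) h1 2
      _ = 4 * (Real.sqrt (c p) ^ 2 * ‖f p.2‖ ^ 2) := by ring
      _ = 4 * (c p * ‖f p.2‖ ^ 2) := by rw [hs]
  have hbfin : ∫⁻ p, ENNReal.ofReal (4 * (c p * ‖f p.2‖ ^ 2)) ∂ν ≠ ∞ := by
    have h4 : ∀ p : ℝ × M, ENNReal.ofReal (4 * (c p * ‖f p.2‖ ^ 2))
        = ENNReal.ofReal 4 * ENNReal.ofReal (c p * ‖f p.2‖ ^ 2) :=
      fun p => ENNReal.ofReal_mul (by norm_num)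
    simp_rw [h4]
    rw [lintegral_const_mul _ hGmeas]
    exact ENNReal.mul_ne_top (by simp) hGfin.ne
  have hlim : ∀ p : ℝ × M,
      Tendsto (fun s : ℝ => ENNReal.ofReal (‖nelsonJ ω s f p - nelsonJ ω t f p‖ ^ 2))
        (nhds t) (nhds 0) := by
    intro p
    have hcont : Continuous fun s : ℝ => nelsonJ ω s f p := by
      unfold nelsonJ; fun_prop
    have hc2 : Continuous fun s : ℝ =>
        ENNReal.ofReal (‖nelsonJ ω s f p - nelsonJ ω t f p‖ ^ 2) :=
      ENNReal.continuous_ofReal.comp (((hcont.sub continuous_const).norm).pow 2)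
    have h := hc2.tendsto t
    simpa using h
  have hL : Tendsto (fun s : ℝ =>
      ∫⁻ p, ENNReal.ofReal (‖nelsonJ ω s f p - nelsonJ ω t f p‖ ^ 2) ∂ν)
      (nhds t) (nhds 0) := by
    have h := tendsto_lintegral_filter_of_dominated_convergence (μ := ν)
      (F := fun s p => ENNReal.ofReal (‖nelsonJ ω s f p - nelsonJ ω t f p‖ ^ 2))
      (f := fun _ => (0 : ℝ≥0∞))
      (fun p => ENNReal.ofReal (4 * (c p * ‖f p.2‖ ^ 2)))
      (Eventually.of_forall hFmeas)
      (Eventually.of_forall fun s => Eventually.of_forall (hbound s))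
      hbfin
      (Eventually.of_forall hlim)
    simpa using h
  have heq : ∀ s : ℝ, eLpNorm (nelsonJ ω s f - nelsonJ ω t f) 2 ν
      = (∫⁻ p, ENNReal.ofReal (‖nelsonJ ω s f p - nelsonJ ω t f p‖ ^ 2) ∂ν) ^ (1/2 : ℝ) := by
    intro s
    rw [eLpNorm_eq_lintegral_rpow_enorm_toReal (by norm_num) (by norm_num)]
    simp only [ENNReal.toReal_ofNat]
    congr 1
    refine lintegral_congr fun p => ?_
    rw [enorm_eq_nnnorm, ← nelson_ofReal_norm_sq]
    simp
  simp_rw [heq]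
  have hcomp := (ENNReal.continuous_rpow_const (y := (1/2 : ℝ))).tendsto 0
  have := hcomp.comp hL
  simpa [ENNReal.zero_rpow_of_pos, Function.comp_def] using this

/-- For every `f ∈ L²(μ)`, the map `ℝ ∋ t ↦ j_t f ∈ L²(λ⊗μ)` is continuous,
i.e. the family of isometries `(j_t)` is strongly continuous. -/
theorem statement2 {M : Type*} [MeasurableSpace M] (μ : Measure M) [SigmaFinite μ]
    (ω : M → ℝ) (hω : Measurable ω) (hωpos : ∀ k, 0 < ω k)
    (f : M → ℂ) (hf : MemLp f 2 μ) :
    ∃ hmem : ∀ t : ℝ, MemLp (nelsonJ ω t f) 2 ((volume : Measure ℝ).prod μ),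
      Continuous fun t : ℝ => (hmem t).toLp (nelsonJ ω t f) := by
  set ν : Measure (ℝ × M) := (volume : Measure ℝ).prod μ with hν
  set f' : M → ℂ := hf.1.mk f with hf'
  have hfm' : StronglyMeasurable f' := hf.1.stronglyMeasurable_mk
  have hff' : f =ᵐ[μ] f' := hf.1.ae_eq_mk
  have hf2' : eLpNorm f' 2 μ < ∞ := (hf.ae_eq hff').2
  obtain ⟨hmem', htend'⟩ := nelson_core μ ω hω hωpos f' hfm' hf2'
  have hsnd : (fun p : ℝ × M => f p.2) =ᵐ[ν] fun p : ℝ × M => f' p.2 := by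
    have hnull : μ {k | ¬ f k = f' k} = 0 := by
      rw [← MeasureTheory.ae_iff]; exact hff'
    have := MeasureTheory.Measure.quasiMeasurePreserving_snd
      (μ := (volume : Measure ℝ)) (ν := μ) |>.preimage_null hnull
    rw [Filter.eventuallyEq_iff_exists_mem]
    refine ⟨(Prod.snd ⁻¹' {k | ¬ f k = f' k})ᶜ, ?_, fun p hp => not_not.mp hp⟩
    refine MeasureTheory.mem_ae_iff.mpr ?_
    rw [compl_compl]
    exact this
  have hcong : ∀ t : ℝ, nelsonJ ω t f =ᵐ[ν] nelsonJ ω t f' := fun t =>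
    hsnd.mono fun p hp => by unfold nelsonJ; dsimp only at hp; rw [hp]
  have hmem : ∀ t : ℝ, MemLp (nelsonJ ω t f) 2 ν := fun t => (hmem' t).ae_eq (hcong t).symm
  refine ⟨hmem, ?_⟩
  haveI : Fact ((1 : ℝ≥0∞) ≤ 2) := ⟨one_le_two⟩
  rw [continuous_iff_continuousAt]
  intro t
  refine (Lp.tendsto_Lp_iff_tendsto_eLpNorm'' (fi := nhds t)
    (fun s : ℝ => nelsonJ ω s f) hmem (nelsonJ ω t f) (hmem t)).mpr ?_
  have heqn : ∀ s : ℝ, eLpNorm (nelsonJ ω s f - nelsonJ ω t f) 2 ν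
      = eLpNorm (nelsonJ ω s f' - nelsonJ ω t f') 2 ν := fun s =>
    eLpNorm_congr_ae ((hcong s).sub (hcong t))
  simp_rw [heqn]
  exact htend' t
end

section
/- The function b is continuous on [0,T), for every t ∈ [0,T) the function s ↦ (y − b_s)/(T−s) is Lebesgue integrable on [0,t], and b satisfies the Brownian-bridge integral equation b_t = q + B_t + ∫₀ᵗ (y − b_s)/(T−s) ds for all t ∈ [0,T). -/
open MeasureTheory Set

/-- The (pathwise) Brownian-bridge path from `q` to `y` in time `T`, driven by `B`:
`b_t = (t/T)y + ((T−t)/T)q + B_t − (T−t)∫₀ᵗ (T−s)⁻² B_s ds`. -/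
noncomputable def bridgePath (ν : ℕ) (T : ℝ) (q y : Fin ν → ℝ)
    (B : ℝ → Fin ν → ℝ) (t : ℝ) : Fin ν → ℝ :=
  (t / T) • y + ((T - t) / T) • q + B t -
    (T - t) • ∫ s in (0 : ℝ)..t, ((T - s) ^ 2)⁻¹ • B s

section core
variable (ν : ℕ) (T : ℝ) (q y : Fin ν → ℝ) (Bc : ℝ → Fin ν → ℝ)

-- f continuous on Iio T
lemma f_contOn (hB : Continuous Bc) :
    ContinuousOn (fun s => ((T - s) ^ 2)⁻¹ • Bc s) (Set.Iio T) := by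
  apply ContinuousOn.fun_smul
  · apply ContinuousOn.inv₀
    · fun_prop
    · intro s hs
      have : T - s ≠ 0 := sub_ne_zero.2 (ne_of_gt hs)
      positivity
  · exact hB.continuousOn

lemma uIcc_sub (t : ℝ) (hT : 0 < T) (ht : t < T) : Set.uIcc (0:ℝ) t ⊆ Set.Iio T :=
  Set.ordConnected_Iio.uIcc_subset hT ht

lemma I_hasDeriv (hT : 0 < T) (hB : Continuous Bc) {t : ℝ} (ht : t < T) :
    HasDerivAt (fun u => ∫ s in (0:ℝ)..u, ((T - s) ^ 2)⁻¹ • Bc s)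
      (((T - t) ^ 2)⁻¹ • Bc t) t := by
  have hfc := f_contOn ν T Bc hB
  refine intervalIntegral.integral_hasDerivAt_right
    ((hfc.mono (uIcc_sub T t hT ht)).intervalIntegrable) ?_ ?_
  · exact ⟨Set.Iio T, Iio_mem_nhds ht, hfc.aestronglyMeasurable measurableSet_Iio⟩
  · exact hfc.continuousAt (Iio_mem_nhds ht)

end core

section core2
variable (ν : ℕ) (T : ℝ) (q y : Fin ν → ℝ) (Bc : ℝ → Fin ν → ℝ)

lemma drift_eq (hT : 0 < T) {t : ℝ} (ht : t < T) :
    (T - t)⁻¹ • (y - bridgePath ν T q y Bc t)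
      = T⁻¹ • (y - q) - (T - t)⁻¹ • Bc t
        + ∫ s in (0:ℝ)..t, ((T - s) ^ 2)⁻¹ • Bc s := by
  have h1 : T ≠ 0 := ne_of_gt hT
  have h2 : T - t ≠ 0 := sub_ne_zero.2 (ne_of_gt ht)
  unfold bridgePath
  match_scalars <;> (field_simp; try ring)

lemma G_hasDeriv (hT : 0 < T) (hB : Continuous Bc) {t : ℝ} (ht : t < T) :
    HasDerivAt (fun u => (u / T) • (y - q) -
        (T - u) • ∫ s in (0:ℝ)..u, ((T - s) ^ 2)⁻¹ • Bc s)
      ((T - t)⁻¹ • (y - bridgePath ν T q y Bc t)) t := by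
  have h1 : HasDerivAt (fun u : ℝ => (u / T) • (y - q)) (T⁻¹ • (y - q)) t := by
    simpa [one_div] using ((hasDerivAt_id t).div_const T).smul_const (y - q)
  have h2 : HasDerivAt (fun u : ℝ => T - u) (-1 : ℝ) t := by
    simpa using (hasDerivAt_const t T).fun_sub (hasDerivAt_id t)
  have h3 := h2.fun_smul (I_hasDeriv ν T Bc hT hB ht)
  have h4 := h1.fun_sub h3
  refine h4.congr_deriv ?_
  rw [drift_eq ν T q y Bc hT ht]
  have h5 : T - t ≠ 0 := sub_ne_zero.2 (ne_of_gt ht)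
  match_scalars <;> field_simp <;> ring

end core2

section core3
variable (ν : ℕ) (T : ℝ) (q y : Fin ν → ℝ) (Bc : ℝ → Fin ν → ℝ)

lemma bridge_contOn (hT : 0 < T) (hB : Continuous Bc) :
    ContinuousOn (bridgePath ν T q y Bc) (Set.Iio T) := by
  have hIc : ContinuousOn (fun u => ∫ s in (0:ℝ)..u, ((T - s) ^ 2)⁻¹ • Bc s) (Set.Iio T) :=
    fun t ht => ((I_hasDeriv ν T Bc hT hB ht).continuousAt).continuousWithinAt
  unfold bridgePath
  exact ContinuousOn.fun_sub (by fun_prop) (ContinuousOn.fun_smul (by fun_prop) hIc)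

lemma drift_contOn (hT : 0 < T) (hB : Continuous Bc) :
    ContinuousOn (fun s => (T - s)⁻¹ • (y - bridgePath ν T q y Bc s)) (Set.Iio T) := by
  apply ContinuousOn.fun_smul
  · exact ContinuousOn.inv₀ (by fun_prop) fun s hs => sub_ne_zero.2 (ne_of_gt hs)
  · exact continuousOn_const.sub (bridge_contOn ν T q y Bc hT hB)

lemma drift_intInt (hT : 0 < T) (hB : Continuous Bc) {t : ℝ} (ht : t < T) :
    IntervalIntegrable (fun s => (T - s)⁻¹ • (y - bridgePath ν T q y Bc s)) volume 0 t :=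
  ((drift_contOn ν T q y Bc hT hB).mono (uIcc_sub T t hT ht)).intervalIntegrable

lemma bridge_eq (hT : 0 < T) (hB : Continuous Bc) {t : ℝ} (ht : t ∈ Set.Ico 0 T) :
    bridgePath ν T q y Bc t =
      q + Bc t + ∫ s in (0 : ℝ)..t, (T - s)⁻¹ • (y - bridgePath ν T q y Bc s) := by
  obtain ⟨ht0, htT⟩ := ht
  have key := intervalIntegral.integral_eq_sub_of_hasDerivAt
    (f := fun u => (u / T) • (y - q) -
        (T - u) • ∫ s in (0:ℝ)..u, ((T - s) ^ 2)⁻¹ • Bc s)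
    (f' := fun s => (T - s)⁻¹ • (y - bridgePath ν T q y Bc s))
    (fun u hu => by
      rw [Set.uIcc_of_le ht0] at hu
      exact G_hasDeriv ν T q y Bc hT hB (lt_of_le_of_lt hu.2 htT))
    (drift_intInt ν T q y Bc hT hB htT)
  rw [key]
  simp only [intervalIntegral.integral_same, zero_div, zero_smul, smul_zero, sub_zero, zero_sub,
    smul_zero, sub_zero]
  unfold bridgePath
  have h1 : T ≠ 0 := ne_of_gt hT
  match_scalars <;> (field_simp; try ring)

end core3

/-- `b` is continuous on `[0,T)`, the drift `s ↦ (y − b_s)/(T−s)` is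
integrable on `[0,t]` for every `t ∈ [0,T)`, and `b` satisfies the Brownian-bridge
integral equation `b_t = q + B_t + ∫₀ᵗ (y − b_s)/(T−s) ds` on `[0,T)`. -/
theorem statement3 (ν : ℕ) (T : ℝ) (hT : 0 < T) (q y : Fin ν → ℝ)
    (B : ℝ → Fin ν → ℝ) (hB : ContinuousOn B (Set.Icc 0 T)) :
    ContinuousOn (bridgePath ν T q y B) (Set.Ico 0 T) ∧
    (∀ t ∈ Set.Ico (0 : ℝ) T,
      IntervalIntegrable (fun s => (T - s)⁻¹ • (y - bridgePath ν T q y B s)) volume 0 t) ∧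
    (∀ t ∈ Set.Ico (0 : ℝ) T,
      bridgePath ν T q y B t =
        q + B t + ∫ s in (0 : ℝ)..t, (T - s)⁻¹ • (y - bridgePath ν T q y B s)) := by
  set Bc : ℝ → Fin ν → ℝ := fun s => B (max 0 (min s T)) with hBc
  have hclamp : ∀ s : ℝ, max 0 (min s T) ∈ Set.Icc 0 T := by
    intro s
    constructor
    · exact le_max_left _ _
    · exact max_le hT.le (min_le_right _ _)
  have hBcc : Continuous Bc := by
    apply hB.comp_continuous
    · fun_prop
    · exact hclamp
  have hBeq : Set.EqOn Bc B (Set.Icc 0 T) := by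
    intro s hs
    simp only [hBc]
    rw [min_eq_left hs.2, max_eq_right hs.1]
  have hbeq : Set.EqOn (bridgePath ν T q y Bc) (bridgePath ν T q y B) (Set.Ico 0 T) := by
    intro t ht
    unfold bridgePath
    rw [hBeq (Set.mem_Icc_of_Ico ht)]
    congr 1
    congr 1
    apply intervalIntegral.integral_congr
    intro s hs
    rw [Set.uIcc_of_le ht.1] at hs
    show ((T - s) ^ 2)⁻¹ • Bc s = ((T - s) ^ 2)⁻¹ • B s
    rw [hBeq ⟨hs.1, hs.2.trans ht.2.le⟩]
  have hdeq : ∀ t ∈ Set.Ico (0:ℝ) T, Set.EqOn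
      (fun s => (T - s)⁻¹ • (y - bridgePath ν T q y Bc s))
      (fun s => (T - s)⁻¹ • (y - bridgePath ν T q y B s)) (Set.Icc 0 t) := by
    intro t ht s hs
    simp only
    rw [hbeq ⟨hs.1, lt_of_le_of_lt hs.2 ht.2⟩]
  refine ⟨?_, ?_, ?_⟩
  · exact ((bridge_contOn ν T q y Bc hT hBcc).mono
      (fun x hx => hx.2)).congr fun t ht => (hbeq ht).symm
  · intro t ht
    rw [intervalIntegrable_iff_integrableOn_Icc_of_le ht.1] at *
    exact ((intervalIntegrable_iff_integrableOn_Icc_of_le ht.1).mp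
      (drift_intInt ν T q y Bc hT hBcc ht.2)).congr_fun (hdeq t ht) measurableSet_Icc
  · intro t ht
    rw [← hbeq ht, ← hBeq (Set.mem_Icc_of_Ico ht), bridge_eq ν T q y Bc hT hBcc ht]
    congr 1
    apply intervalIntegral.integral_congr
    intro s hs
    rw [Set.uIcc_of_le ht.1] at hs
    exact hdeq t ht hs
end

section
/- One has b_t → y as t ↑ T; consequently b extends to a continuous function on [0,T] with terminal value b_T = y. -/
open MeasureTheory Set Filter

lemma aux_hasDeriv (T s : ℝ) (h : s ≠ T) :
    HasDerivAt (fun u => (T - u)⁻¹) (((T - s) ^ 2)⁻¹) s := by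
  have h1 : HasDerivAt (fun u : ℝ => T - u) (-1) s := by
    simpa using (hasDerivAt_id s).const_sub T
  have h2 := h1.inv (sub_ne_zero.mpr (Ne.symm h))
  exact h2.congr_deriv (by simp)

lemma aux_contOn {T a b : ℝ} (h : ∀ s ∈ Set.uIcc a b, s ≠ T) :
    ContinuousOn (fun s => ((T - s) ^ 2)⁻¹) (Set.uIcc a b) := by
  apply ContinuousOn.inv₀
  · fun_prop
  · intro s hs
    exact pow_ne_zero 2 (sub_ne_zero.mpr (Ne.symm (h s hs)))

lemma aux_integral_invsq {T a t : ℝ} (ha : a < T) (ht : t < T) :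
    ∫ s in a..t, ((T - s) ^ 2)⁻¹ = (T - t)⁻¹ - (T - a)⁻¹ := by
  have hne : ∀ s ∈ Set.uIcc a t, s ≠ T := by
    intro s hs
    have hmax : max a t < T := max_lt ha ht
    exact ne_of_lt (lt_of_le_of_lt hs.2 hmax)
  have := intervalIntegral.integral_eq_sub_of_hasDerivAt
    (f := fun u => (T - u)⁻¹) (f' := fun s => ((T - s) ^ 2)⁻¹)
    (fun s hs => aux_hasDeriv T s (hne s hs))
    (ContinuousOn.intervalIntegrable (aux_contOn hne))
  simpa using this

/-- `b_t → y` as `t ↑ T`; consequently `b` extends to a continuous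
function on `[0,T]` with terminal value `y`. -/
theorem statement5 (ν : ℕ) (T : ℝ) (hT : 0 < T) (q y : Fin ν → ℝ)
    (B : ℝ → Fin ν → ℝ) (hB : ContinuousOn B (Set.Icc 0 T)) :
    Filter.Tendsto (bridgePath ν T q y B) (nhdsWithin T (Set.Ico 0 T)) (nhds y) ∧
    ∃ c : ℝ → Fin ν → ℝ, ContinuousOn c (Set.Icc 0 T) ∧
      (∀ t ∈ Set.Ico (0 : ℝ) T, c t = bridgePath ν T q y B t) ∧ c T = y := by
  have hT0 : (0:ℝ) ≤ T := hT.le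
  set g : ℝ → Fin ν → ℝ := fun s => ((T - s) ^ 2)⁻¹ • (B s - B T) with hgdef
  set f : ℝ → Fin ν → ℝ := fun s => ((T - s) ^ 2)⁻¹ • B s with hfdef
  -- continuity of the integrands on Icc 0 t' for t' < T
  have hsc : ∀ t' : ℝ, t' < T → ContinuousOn (fun s => ((T - s) ^ 2)⁻¹) (Set.Icc 0 t') := by
    intro t' ht'
    apply ContinuousOn.inv₀
    · fun_prop
    · intro s hs
      have : s ≠ T := ne_of_lt (lt_of_le_of_lt hs.2 ht')
      exact pow_ne_zero 2 (sub_ne_zero.mpr (Ne.symm this))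
  have hBc : ∀ t' : ℝ, t' ≤ T → ContinuousOn B (Set.Icc 0 t') :=
    fun t' ht' => hB.mono (Set.Icc_subset_Icc le_rfl ht')
  have hgc : ∀ t' : ℝ, t' < T → ContinuousOn g (Set.Icc 0 t') := by
    intro t' ht'
    exact (hsc t' ht').smul ((hBc t' ht'.le).sub continuousOn_const)
  have hfc : ∀ t' : ℝ, t' < T → ContinuousOn f (Set.Icc 0 t') := by
    intro t' ht'
    exact (hsc t' ht').smul (hBc t' ht'.le)
  have hgint : ∀ a t : ℝ, 0 ≤ a → a ≤ t → t < T → IntervalIntegrable g volume a t := by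
    intro a t h0 hat htT
    exact ((hgc t htT).mono (by
      rw [Set.uIcc_of_le hat]; exact Set.Icc_subset_Icc h0 le_rfl)).intervalIntegrable
  have hfint : ∀ a t : ℝ, 0 ≤ a → a ≤ t → t < T → IntervalIntegrable f volume a t := by
    intro a t h0 hat htT
    exact ((hfc t htT).mono (by
      rw [Set.uIcc_of_le hat]; exact Set.Icc_subset_Icc h0 le_rfl)).intervalIntegrable
  have hsint : ∀ a t : ℝ, 0 ≤ a → a ≤ t → t < T →
      IntervalIntegrable (fun s => ((T - s) ^ 2)⁻¹) volume a t := by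
    intro a t h0 hat htT
    exact ((hsc t htT).mono (by
      rw [Set.uIcc_of_le hat]; exact Set.Icc_subset_Icc h0 le_rfl)).intervalIntegrable
  -- the key decomposition identity on [0, T)
  have hident : ∀ t ∈ Set.Ico (0:ℝ) T,
      bridgePath ν T q y B t = (t / T) • y + ((T - t) / T) • q + B t
        - (1 - (T - t) / T) • B T - (T - t) • ∫ s in (0:ℝ)..t, g s := by
    intro t ht
    have htT : t < T := ht.2
    have ht0 : 0 ≤ t := ht.1
    have hTt : (0:ℝ) < T - t := by linarith
    have hsum : (∫ s in (0:ℝ)..t, f s)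
        = (∫ s in (0:ℝ)..t, g s) + ((T - t)⁻¹ - T⁻¹) • B T := by
      have h1 : (∫ s in (0:ℝ)..t, f s)
          = (∫ s in (0:ℝ)..t, g s) + ∫ s in (0:ℝ)..t, ((T - s) ^ 2)⁻¹ • B T := by
        have hsBint : IntervalIntegrable (fun s => ((T - s) ^ 2)⁻¹ • B T) volume 0 t :=
          (((hsc t htT).smul continuousOn_const).mono
            (by rw [Set.uIcc_of_le ht0])).intervalIntegrable
        rw [← intervalIntegral.integral_add (hgint 0 t le_rfl ht0 htT) hsBint]
        congr 1
        ext s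
        simp [hgdef, hfdef, smul_sub]
      rw [h1, intervalIntegral.integral_smul_const, aux_integral_invsq hT htT, sub_zero]
    show (t / T) • y + ((T - t) / T) • q + B t - (T - t) • ∫ s in (0:ℝ)..t, f s = _
    rw [hsum, smul_add, smul_smul]
    have : (T - t) * ((T - t)⁻¹ - T⁻¹) = 1 - (T - t) / T := by
      field_simp
    rw [this]
    abel
  -- the key limit : (T - t) • ∫ g → 0
  have key : Filter.Tendsto (fun t => (T - t) • ∫ s in (0:ℝ)..t, g s)
      (nhdsWithin T (Set.Ico 0 T)) (nhds 0) := by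
    rw [Metric.tendsto_nhdsWithin_nhds]
    intro ε hε
    have hBT : ContinuousWithinAt B (Set.Icc 0 T) T := hB T ⟨hT0, le_rfl⟩
    rw [Metric.continuousWithinAt_iff] at hBT
    obtain ⟨δ₁, hδ₁, hδ₁'⟩ := hBT (ε/4) (by positivity)
    set δ' := min δ₁ T with hδ'def
    have hδ'0 : 0 < δ' := lt_min hδ₁ hT
    have hδ'T : δ' ≤ T := min_le_right _ _
    set t₀ := T - δ'/2 with ht₀def
    have ht₀0 : 0 ≤ t₀ := by simp only [ht₀def]; linarith
    have ht₀T : t₀ < T := by simp only [ht₀def]; linarith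
    have hBbound : ∀ s ∈ Set.Icc t₀ T, ‖B s - B T‖ ≤ ε/4 := by
      intro s hs
      have h1 : dist s T < δ₁ := by
        rw [Real.dist_eq, abs_of_nonpos (by linarith [hs.2])]
        have := hs.1
        simp only [ht₀def] at this
        have hd : δ'/2 < δ₁ := by
          have : δ' ≤ δ₁ := min_le_left _ _
          linarith
        linarith
      have := hδ₁' ⟨le_trans ht₀0 hs.1, hs.2⟩ h1
      rw [dist_eq_norm] at this
      linarith
    set C := ∫ s in (0:ℝ)..t₀, ‖g s‖ with hCdef
    have hC0 : 0 ≤ C :=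
      intervalIntegral.integral_nonneg ht₀0 (fun _ _ => norm_nonneg _)
    refine ⟨min (T - t₀) (ε/(4*(C+1))), lt_min (by linarith) (by positivity), ?_⟩
    intro t ht hdist
    have htT : t < T := ht.2
    have ht0 : 0 ≤ t := ht.1
    have hTt : (0:ℝ) < T - t := by linarith
    rw [Real.dist_eq, abs_of_nonpos (by linarith)] at hdist
    have hdist' : T - t < min (T - t₀) (ε/(4*(C+1))) := by linarith
    have ht₀t : t₀ ≤ t := by
      have := lt_of_lt_of_le hdist' (min_le_left _ _); linarith
    have hTtε : T - t < ε/(4*(C+1)) := lt_of_lt_of_le hdist' (min_le_right _ _)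
    have hsplit : (∫ s in (0:ℝ)..t, g s)
        = (∫ s in (0:ℝ)..t₀, g s) + ∫ s in t₀..t, g s :=
      (intervalIntegral.integral_add_adjacent_intervals
        (hgint 0 t₀ le_rfl ht₀0 ht₀T) (hgint t₀ t ht₀0 ht₀t htT)).symm
    rw [dist_eq_norm, sub_zero, hsplit, smul_add]
    have h1 : ‖(T - t) • ∫ s in (0:ℝ)..t₀, g s‖ ≤ (T - t) * C := by
      rw [norm_smul, Real.norm_eq_abs, abs_of_pos hTt]
      exact mul_le_mul_of_nonneg_left
        (intervalIntegral.norm_integral_le_integral_norm ht₀0) hTt.le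
    have h2 : ‖(T - t) • ∫ s in t₀..t, g s‖ ≤ ε/4 := by
      rw [norm_smul, Real.norm_eq_abs, abs_of_pos hTt]
      have hb : (∫ s in t₀..t, ‖g s‖) ≤ ∫ s in t₀..t, (ε/4) * ((T - s) ^ 2)⁻¹ := by
        apply intervalIntegral.integral_mono_on ht₀t
        · exact (hgint t₀ t ht₀0 ht₀t htT).norm
        · exact (hsint t₀ t ht₀0 ht₀t htT).const_mul _
        · intro s hs
          have hsT : s < T := lt_of_le_of_lt hs.2 htT
          have hpos : (0:ℝ) < ((T - s) ^ 2)⁻¹ := by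
            have : (0:ℝ) < T - s := by linarith
            positivity
          simp only [hgdef]
          rw [norm_smul, Real.norm_eq_abs, abs_of_pos hpos, mul_comm (ε/4)]
          apply mul_le_mul_of_nonneg_left _ hpos.le
          exact hBbound s ⟨hs.1, hsT.le⟩
      have hval : (∫ s in t₀..t, (ε/4) * ((T - s) ^ 2)⁻¹)
          = (ε/4) * ((T - t)⁻¹ - (T - t₀)⁻¹) := by
        rw [intervalIntegral.integral_const_mul, aux_integral_invsq ht₀T htT]
      have hnorm : ‖∫ s in t₀..t, g s‖ ≤ (ε/4) * ((T - t)⁻¹ - (T - t₀)⁻¹) := by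
        calc ‖∫ s in t₀..t, g s‖ ≤ ∫ s in t₀..t, ‖g s‖ :=
              intervalIntegral.norm_integral_le_integral_norm ht₀t
          _ ≤ _ := by rw [← hval]; exact hb
      calc (T - t) * ‖∫ s in t₀..t, g s‖
          ≤ (T - t) * ((ε/4) * ((T - t)⁻¹ - (T - t₀)⁻¹)) :=
            mul_le_mul_of_nonneg_left hnorm hTt.le
        _ ≤ (T - t) * ((ε/4) * (T - t)⁻¹) := by
            apply mul_le_mul_of_nonneg_left _ hTt.le
            apply mul_le_mul_of_nonneg_left _ (by positivity)
            have hpos : (0:ℝ) < (T - t₀)⁻¹ := by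
              have : (0:ℝ) < T - t₀ := by linarith
              positivity
            linarith
        _ = ε/4 := by
            field_simp
    calc ‖(T - t) • (∫ s in (0:ℝ)..t₀, g s) + (T - t) • ∫ s in t₀..t, g s‖
        ≤ ‖(T - t) • ∫ s in (0:ℝ)..t₀, g s‖ + ‖(T - t) • ∫ s in t₀..t, g s‖ :=
          norm_add_le _ _
      _ ≤ (T - t) * C + ε/4 := add_le_add h1 h2
      _ < ε := by
          have h4 : (T - t) * (4*(C+1)) < ε := (lt_div_iff₀ (by positivity)).mp hTtε
          nlinarith
  -- limits of the elementary pieces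
  have l1 : Filter.Tendsto (fun t : ℝ => (t / T) • y)
      (nhdsWithin T (Set.Ico 0 T)) (nhds y) := by
    have h : Filter.Tendsto (fun t : ℝ => (t / T) • y) (nhds T) (nhds ((T / T) • y)) :=
      ((continuous_id.div_const T).smul continuous_const).tendsto T
    rw [div_self hT.ne', one_smul] at h
    exact h.mono_left nhdsWithin_le_nhds
  have l2 : Filter.Tendsto (fun t : ℝ => ((T - t) / T) • q)
      (nhdsWithin T (Set.Ico 0 T)) (nhds 0) := by
    have h : Filter.Tendsto (fun t : ℝ => ((T - t) / T) • q) (nhds T)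
        (nhds (((T - T) / T) • q)) :=
      (((continuous_const.sub continuous_id).div_const T).smul continuous_const).tendsto T
    simpa using h.mono_left nhdsWithin_le_nhds
  have l3 : Filter.Tendsto B (nhdsWithin T (Set.Ico 0 T)) (nhds (B T)) :=
    (hB T ⟨hT0, le_rfl⟩).mono_left (nhdsWithin_mono T Set.Ico_subset_Icc_self)
  have l4 : Filter.Tendsto (fun t : ℝ => (1 - (T - t) / T) • B T)
      (nhdsWithin T (Set.Ico 0 T)) (nhds (B T)) := by
    have h : Filter.Tendsto (fun t : ℝ => (1 - (T - t) / T) • B T) (nhds T)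
        (nhds ((1 - (T - T) / T) • B T)) :=
      ((continuous_const.sub ((continuous_const.sub continuous_id).div_const T)).smul
        continuous_const).tendsto T
    simpa using h.mono_left nhdsWithin_le_nhds
  have main : Filter.Tendsto (bridgePath ν T q y B) (nhdsWithin T (Set.Ico 0 T)) (nhds y) := by
    have hfinal := (((l1.add l2).add l3).sub l4).sub key
    have hy : y + 0 + B T - B T - 0 = y := by abel
    rw [hy] at hfinal
    apply Filter.Tendsto.congr' _ hfinal
    filter_upwards [self_mem_nhdsWithin] with t ht
    exact (hident t ht).symm
  classical
  refine ⟨main, fun t => if t = T then y else bridgePath ν T q y B t, ?_, ?_, by simp⟩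
  · -- continuity of the extension
    intro t ht
    rcases eq_or_lt_of_le ht.2 with heq | htT
    · rw [heq]
      have hIcc : Set.Icc (0:ℝ) T = Set.Ico 0 T ∪ {T} := (Set.Ico_union_right hT0).symm
      have hct : (if T = T then y else bridgePath ν T q y B T) = y := if_pos rfl
      rw [ContinuousWithinAt, hct, hIcc, nhdsWithin_union, Filter.tendsto_sup]
      constructor
      · apply Filter.Tendsto.congr' _ main
        filter_upwards [self_mem_nhdsWithin] with x hx
        exact (if_neg (ne_of_lt hx.2)).symm
      · rw [nhdsWithin_singleton]
        have := tendsto_pure_nhds (fun x => if x = T then y else bridgePath ν T q y B x) T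
        rwa [if_pos rfl] at this
    · -- interior point
      have hbpu : bridgePath ν T q y B = fun u : ℝ =>
          (u / T) • y + ((T - u) / T) • q + B u - (T - u) • ∫ s in (0:ℝ)..u, f s := rfl
      set t' := (t + T)/2 with ht'def
      have htt' : t < t' := by simp only [ht'def]; linarith
      have ht'T : t' < T := by simp only [ht'def]; linarith
      have ht'0 : 0 ≤ t' := le_trans ht.1 htt'.le
      have htmem' : t ∈ Set.Icc (0:ℝ) t' := ⟨ht.1, htt'.le⟩
      have hprim : ContinuousOn (fun x => ∫ s in (0:ℝ)..x, f s) (Set.Icc 0 t') := by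
        have h := intervalIntegral.continuousOn_primitive_interval
          (f := f) (a := 0) (b := t') (μ := volume)
          (by rw [Set.uIcc_of_le ht'0]; exact (hfc t' ht'T).integrableOn_Icc)
        rwa [Set.uIcc_of_le ht'0] at h
      have hbp : ContinuousWithinAt (bridgePath ν T q y B) (Set.Icc 0 t') t := by
        rw [hbpu]
        refine ContinuousWithinAt.sub (ContinuousWithinAt.add (ContinuousWithinAt.add ?_ ?_) ?_) ?_
        · exact ((continuous_id.div_const T).smul continuous_const).continuousWithinAt
        · exact (((continuous_const.sub continuous_id).div_const T).smul
            continuous_const).continuousWithinAt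
        · exact (hBc t' ht'T.le) t htmem'
        · exact ((continuous_const.sub continuous_id).continuousWithinAt).smul (hprim t htmem')
      have hmem : Set.Icc (0:ℝ) t' ∈ nhdsWithin t (Set.Icc 0 T) :=
        Filter.mem_of_superset (inter_mem_nhdsWithin _ (Iio_mem_nhds htt'))
          (fun x hx => ⟨hx.1.1, hx.2.le⟩)
      have hbp' : ContinuousWithinAt (bridgePath ν T q y B) (Set.Icc 0 T) t :=
        hbp.mono_of_mem_nhdsWithin hmem
      apply hbp'.congr_of_eventuallyEq _ (if_neg (ne_of_lt htT))
      filter_upwards [Filter.mem_of_superset (inter_mem_nhdsWithin _ (Iio_mem_nhds htT))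
        (Set.Subset.refl _)] with x hx
      exact if_neg (ne_of_lt hx.2)
  · intro t ht
    exact if_neg (ne_of_lt ht.2)
end

section
/- For every κ > 0 there exists a constant C = C(ν, κ, T) > 0, depending only on ν, κ, and T, such that ∫₀^T (T−s)^κ E[|Y_s|^{2κ}] ds ≤ C · E[(1 + |q − y|)^{2κ}]. -/
open MeasureTheory ProbabilityTheory ENNReal
open scoped NNReal



noncomputable def eLn (ν : ℕ) : (Fin ν → ℝ) →L[ℝ] EuclideanSpace ℝ (Fin ν) :=
  ((EuclideanSpace.equiv (Fin ν) ℝ).symm : (Fin ν → ℝ) ≃L[ℝ] EuclideanSpace ℝ (Fin ν))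

lemma eLn_apply {ν : ℕ} (v : Fin ν → ℝ) (i : Fin ν) : eLn ν v i = v i := rfl

lemma sum_sq_eq_norm_eLn {ν : ℕ} (v : Fin ν → ℝ) : ∑ i, v i ^ 2 = ‖eLn ν v‖ ^ 2 := by
  rw [EuclideanSpace.norm_eq]
  rw [Real.sq_sqrt (by positivity)]
  simp [eLn_apply, sq_abs]

lemma sqrt_sum_sq_eq_norm_eLn {ν : ℕ} (v : Fin ν → ℝ) :
    Real.sqrt (∑ i, v i ^ 2) = ‖eLn ν v‖ := by
  rw [sum_sq_eq_norm_eLn, Real.sqrt_sq (norm_nonneg _)]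

lemma norm_eLn_le_sum_abs {ν : ℕ} (v : Fin ν → ℝ) : ‖eLn ν v‖ ≤ ∑ i, |v i| := by
  rw [← sqrt_sum_sq_eq_norm_eLn]
  have h1 : ∑ i, v i ^ 2 = ∑ i, |v i| ^ 2 := by simp [sq_abs]
  rw [h1]
  calc Real.sqrt (∑ i, |v i| ^ 2) ≤ Real.sqrt ((∑ i, |v i|) ^ 2) := by
        apply Real.sqrt_le_sqrt
        exact Finset.sum_sq_le_sq_sum_of_nonneg (fun i _ => abs_nonneg _)
    _ = ∑ i, |v i| := Real.sqrt_sq (Finset.sum_nonneg fun i _ => abs_nonneg _)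

lemma add3_rpow_le {a b c : ℝ≥0∞} {p : ℝ} (hp : 0 ≤ p) :
    (a + b + c) ^ p ≤ 3 ^ p * (a ^ p + b ^ p + c ^ p) := by
  set M := max a (max b c) with hM
  have h1 : a + b + c ≤ 3 * M := by
    have ha : a ≤ M := le_max_left _ _
    have hb : b ≤ M := le_trans (le_max_left _ _) (le_max_right _ _)
    have hc : c ≤ M := le_trans (le_max_right _ _) (le_max_right _ _)
    calc a + b + c ≤ M + M + M := by gcongr
      _ = 3 * M := by ring
  have h2 : M ^ p ≤ a ^ p + b ^ p + c ^ p := by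
    have : M = a ∨ M = b ∨ M = c := by
      rcases le_total a (max b c) with h | h
      · rcases le_total b c with h' | h'
        · right; right; rw [hM, max_eq_right h, max_eq_right h']
        · right; left; rw [hM, max_eq_right h, max_eq_left h']
      · left; rw [hM, max_eq_left h]
    rcases this with h | h | h <;> rw [h]
    · calc a ^ p ≤ a ^ p + b ^ p := le_self_add
        _ ≤ _ := le_self_add
    · calc b ^ p ≤ a ^ p + b ^ p := le_add_self
        _ ≤ _ := le_self_add
    · exact le_add_self
  calc (a + b + c) ^ p ≤ (3 * M) ^ p := ENNReal.rpow_le_rpow h1 hp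
    _ = 3 ^ p * M ^ p := ENNReal.mul_rpow_of_nonneg _ _ hp
    _ ≤ 3 ^ p * (a ^ p + b ^ p + c ^ p) := by gcongr

lemma lintegral_rpow_le_rpow_lintegral {Ω : Type*} [MeasurableSpace Ω] (P : Measure Ω)
    [IsProbabilityMeasure P] {f : Ω → ℝ≥0∞} (hf : AEMeasurable f P) {θ : ℝ}
    (hθ0 : 0 < θ) (hθ1 : θ ≤ 1) :
    ∫⁻ ω, (f ω) ^ θ ∂P ≤ (∫⁻ ω, f ω ∂P) ^ θ := by
  rcases eq_or_lt_of_le hθ1 with h1 | h1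
  · simp [h1]
  · have hconj : (1/θ).HolderConjugate (1/(1-θ)) :=
      Real.holderConjugate_one_div hθ0 (by linarith) (by ring)
    have := ENNReal.lintegral_mul_le_Lp_mul_Lq P hconj (f := fun ω => (f ω) ^ θ)
      (g := fun _ => 1) (hf.pow_const _) aemeasurable_const
    simp only [Pi.mul_apply, mul_one, ENNReal.one_rpow, lintegral_const, measure_univ,
      one_mul] at this
    calc ∫⁻ ω, (f ω) ^ θ ∂P ≤ (∫⁻ ω, ((f ω) ^ θ) ^ (1/θ) ∂P) ^ (1/(1/θ)) := by
          simpa using this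
      _ = (∫⁻ ω, f ω ∂P) ^ θ := by
          rw [one_div_one_div]
          congr 1
          refine lintegral_congr fun ω => ?_
          rw [← ENNReal.rpow_mul, mul_one_div, div_self (ne_of_gt hθ0), ENNReal.rpow_one]

lemma iSup_min_nat_rpow (x : ℝ≥0∞) {c : ℝ} (hc : 1 ≤ c) :
    ⨆ N : ℕ, (min x (N : ℝ≥0∞)) ^ c = x ^ c := by
  apply le_antisymm
  · exact iSup_le fun N => ENNReal.rpow_le_rpow (min_le_left _ _) (by linarith)
  · rcases eq_or_ne x ⊤ with hx | hx
    · rw [hx]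
      rw [ENNReal.top_rpow_of_pos (by linarith)]
      rw [top_le_iff, ← top_le_iff]
      calc (⊤ : ℝ≥0∞) = ⨆ N : ℕ, (N : ℝ≥0∞) := ENNReal.iSup_natCast.symm
        _ ≤ ⨆ N : ℕ, (min ⊤ (N : ℝ≥0∞)) ^ c := by
            apply iSup_mono
            intro N
            rw [min_eq_right le_top]
            rcases Nat.eq_zero_or_pos N with h | h
            · simp [h]
            · calc (N : ℝ≥0∞) = (N : ℝ≥0∞) ^ (1:ℝ) := (ENNReal.rpow_one _).symm
                _ ≤ (N : ℝ≥0∞) ^ c := by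
                    apply ENNReal.rpow_le_rpow_of_exponent_le _ hc
                    exact_mod_cast Nat.one_le_cast.mpr h
    · obtain ⟨N, hN⟩ := ENNReal.exists_nat_gt hx
      calc x ^ c = (min x (N : ℝ≥0∞)) ^ c := by rw [min_eq_left hN.le]
        _ ≤ _ := le_iSup (fun N : ℕ => (min x (N : ℝ≥0∞)) ^ c) N


lemma pi_map_eval {ι : Type*} [Fintype ι] {α : ι → Type*} [∀ i, MeasurableSpace (α i)]
    (μ : ∀ i, Measure (α i)) [∀ i, IsProbabilityMeasure (μ i)] (i : ι) :
    (Measure.pi μ).map (Function.eval i) = μ i := by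
  classical
  ext s hs
  rw [Measure.map_apply (measurable_pi_apply i) hs, Set.eval_preimage, Measure.pi_pi,
    Fintype.prod_eq_single i]
  · simp
  · intro j hj
    simp [Function.update_of_ne hj]

lemma integrable_abs_pow_mul_exp (k : ℕ) :
    Integrable (fun x : ℝ => |x| ^ k * Real.exp (-(2⁻¹) * x ^ 2)) := by
  have key : ∀ x : ℝ, ‖|x| ^ k * Real.exp (-(2⁻¹) * x ^ 2)‖ ≤
      Real.exp (-(2⁻¹) * x ^ 2) + (4 ^ k * (Nat.factorial k)) * Real.exp (-(4⁻¹) * x ^ 2) := by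
    intro x
    rw [Real.norm_eq_abs, abs_of_nonneg (by positivity)]
    have hxk : |x| ^ k ≤ 1 + 4 ^ k * (Nat.factorial k) * Real.exp (4⁻¹ * x ^ 2) := by
      rcases le_total (|x|) 1 with h | h
      · have h0 : |x| ^ k ≤ 1 := pow_le_one₀ (abs_nonneg _) h
        have h1 : (0:ℝ) ≤ 4 ^ k * (Nat.factorial k) * Real.exp (4⁻¹ * x ^ 2) := by positivity
        linarith
      · have h1 : |x| ^ k ≤ (x ^ 2) ^ k := by
          calc |x| ^ k ≤ (|x| ^ 2) ^ k := by
                apply pow_le_pow_left₀ (abs_nonneg _)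
                nlinarith
            _ = (x ^ 2) ^ k := by rw [sq_abs]
        have h2 : (4⁻¹ * x ^ 2) ^ k / (Nat.factorial k : ℝ) ≤ Real.exp (4⁻¹ * x ^ 2) :=
          Real.pow_div_factorial_le_exp (x := 4⁻¹ * x ^ 2) (by positivity) k
        have hf : (0:ℝ) < (Nat.factorial k : ℝ) := by positivity
        rw [div_le_iff₀ hf] at h2
        have h3 : (x ^ 2) ^ k ≤ 4 ^ k * (Nat.factorial k) * Real.exp (4⁻¹ * x ^ 2) := by
          calc (x ^ 2) ^ k = 4 ^ k * (4⁻¹ * x ^ 2) ^ k := by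
                rw [mul_pow, ← mul_assoc, ← mul_pow]
                norm_num
            _ ≤ 4 ^ k * (Real.exp (4⁻¹ * x ^ 2) * (Nat.factorial k)) := by gcongr
            _ = 4 ^ k * (Nat.factorial k) * Real.exp (4⁻¹ * x ^ 2) := by ring
        have h4 : (0:ℝ) ≤ 1 := zero_le_one
        linarith
    calc |x| ^ k * Real.exp (-(2⁻¹) * x ^ 2)
        ≤ (1 + 4 ^ k * (Nat.factorial k) * Real.exp (4⁻¹ * x ^ 2)) * Real.exp (-(2⁻¹) * x ^ 2) := by
          gcongr
      _ = Real.exp (-(2⁻¹) * x ^ 2) + (4 ^ k * (Nat.factorial k)) *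
            (Real.exp (4⁻¹ * x ^ 2) * Real.exp (-(2⁻¹) * x ^ 2)) := by ring
      _ = Real.exp (-(2⁻¹) * x ^ 2) + (4 ^ k * (Nat.factorial k)) * Real.exp (-(4⁻¹) * x ^ 2) := by
          rw [← Real.exp_add]
          ring_nf
  have hint : Integrable (fun x : ℝ => Real.exp (-(2⁻¹) * x ^ 2) +
      (4 ^ k * (Nat.factorial k)) * Real.exp (-(4⁻¹) * x ^ 2)) :=
    (integrable_exp_neg_mul_sq (by norm_num : (0:ℝ) < 2⁻¹)).add
      ((integrable_exp_neg_mul_sq (by norm_num : (0:ℝ) < 4⁻¹)).const_mul _)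
  refine Integrable.mono' hint ?_ (Filter.Eventually.of_forall key)
  exact ((measurable_abs.pow_const k).mul
    (((measurable_id.pow_const 2).const_mul _).exp)).aestronglyMeasurable

lemma gaussianPDFReal_one_eq (x : ℝ) : gaussianPDFReal 0 1 x =
    (Real.sqrt (2 * Real.pi))⁻¹ * Real.exp (-(2⁻¹) * x ^ 2) := by
  rw [gaussianPDFReal]
  simp only [NNReal.coe_one, mul_one, sub_zero]
  congr 1
  ring

/-- Standard gaussian absolute moment. -/
noncomputable def gmom (p : ℝ) : ℝ≥0∞ :=
  ∫⁻ x, ENNReal.ofReal (|x| ^ p) ∂(gaussianReal 0 1)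

lemma gmom_ne_top {p : ℝ} (hp : 0 ≤ p) : gmom p ≠ ⊤ := by
  set k := ⌈p⌉₊ with hk
  have hbound : ∀ x : ℝ, |x| ^ p ≤ 1 + |x| ^ k := by
    intro x
    rcases le_total (|x|) 1 with h | h
    · have h0 : |x| ^ p ≤ 1 := by
        calc |x| ^ p ≤ 1 ^ p := Real.rpow_le_rpow (abs_nonneg _) h hp
          _ = 1 := Real.one_rpow _
      have h1 : (0:ℝ) ≤ |x| ^ k := by positivity
      linarith
    · have h0 : |x| ^ p ≤ |x| ^ k := by
        calc |x| ^ p ≤ |x| ^ (k : ℝ) := Real.rpow_le_rpow_of_exponent_le h (Nat.le_ceil p)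
          _ = |x| ^ k := Real.rpow_natCast _ _
      linarith
  have hint : Integrable (fun x : ℝ => (1 + |x| ^ k) * gaussianPDFReal 0 1 x) := by
    have heq : (fun x : ℝ => (1 + |x| ^ k) * gaussianPDFReal 0 1 x) =
        fun x : ℝ => gaussianPDFReal 0 1 x +
          (Real.sqrt (2 * Real.pi))⁻¹ * (|x| ^ k * Real.exp (-(2⁻¹) * x ^ 2)) := by
      funext x
      rw [gaussianPDFReal_one_eq x]
      ring
    rw [heq]
    exact (integrable_gaussianPDFReal 0 1).add
      ((integrable_abs_pow_mul_exp k).const_mul _)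
  rw [gmom, gaussianReal_of_var_ne_zero 0 one_ne_zero]
  rw [lintegral_withDensity_eq_lintegral_mul _ (measurable_gaussianPDF _ _)
    (measurable_abs.pow_const p).ennreal_ofReal]
  have hle : ∫⁻ x, (gaussianPDF 0 1 * fun x => ENNReal.ofReal (|x| ^ p)) x ∂volume ≤
      ∫⁻ x, ENNReal.ofReal ((1 + |x| ^ k) * gaussianPDFReal 0 1 x) ∂volume := by
    apply lintegral_mono
    intro x
    simp only [Pi.mul_apply, gaussianPDF]
    rw [← ENNReal.ofReal_mul (gaussianPDFReal_nonneg _ _ _)]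
    apply ENNReal.ofReal_le_ofReal
    calc gaussianPDFReal 0 1 x * |x| ^ p ≤ gaussianPDFReal 0 1 x * (1 + |x| ^ k) := by
          gcongr
          · exact gaussianPDFReal_nonneg _ _ _
          · exact hbound x
      _ = (1 + |x| ^ k) * gaussianPDFReal 0 1 x := by ring
  refine ne_of_lt (lt_of_le_of_lt hle ?_)
  have hnn : 0 ≤ᶠ[MeasureTheory.ae volume] fun x : ℝ => (1 + |x| ^ k) * gaussianPDFReal 0 1 x :=
    Filter.Eventually.of_forall fun x => by
      simp only [Pi.zero_apply]
      exact mul_nonneg (by positivity) (gaussianPDFReal_nonneg _ _ _)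
  rw [← ofReal_integral_eq_lintegral_ofReal hint hnn]
  exact ENNReal.ofReal_lt_top

lemma lintegral_abs_rpow_gaussianReal {p : ℝ} (hp : 0 < p) (v : ℝ≥0) :
    ∫⁻ x, ENNReal.ofReal (|x| ^ p) ∂(gaussianReal 0 v) =
      ENNReal.ofReal (Real.sqrt v ^ p) * gmom p := by
  rcases eq_or_ne v 0 with hv | hv
  · rw [hv, gaussianReal_zero_var, lintegral_dirac]
    simp [Real.zero_rpow (ne_of_gt hp)]
  · have hmap : (gaussianReal 0 1).map ((Real.sqrt v : ℝ) * ·) = gaussianReal 0 v := by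
      rw [gaussianReal_map_const_mul]
      congr 1
      · simp
      · ext
        simp [Real.sq_sqrt (NNReal.coe_nonneg v)]
    rw [← hmap]
    rw [lintegral_map (measurable_abs.pow_const p).ennreal_ofReal (by fun_prop)]
    have hpt : ∀ x : ℝ, ENNReal.ofReal (|Real.sqrt v * x| ^ p) =
        ENNReal.ofReal (Real.sqrt v ^ p) * ENNReal.ofReal (|x| ^ p) := by
      intro x
      rw [abs_mul, abs_of_nonneg (Real.sqrt_nonneg _),
        Real.mul_rpow (Real.sqrt_nonneg _) (abs_nonneg _),
        ENNReal.ofReal_mul (by positivity)]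
    simp_rw [hpt]
    rw [lintegral_const_mul' _ _ ENNReal.ofReal_ne_top]
    rfl


/-- Minkowski's integral inequality for `lintegral`, natural exponent. -/
lemma lintegral_lintegral_pow_le {Ω : Type*} [MeasurableSpace Ω] (P : Measure Ω)
    [IsProbabilityMeasure P] (μ : Measure ℝ) [SFinite μ]
    (h : ℝ → Ω → ℝ≥0∞) (hmeas : Measurable (Function.uncurry h)) {n : ℕ} (hn : 1 ≤ n) :
    ∫⁻ ω, (∫⁻ u, h u ω ∂μ) ^ (n : ℝ) ∂P ≤
      (∫⁻ u, (∫⁻ ω, (h u ω) ^ (n : ℝ) ∂P) ^ (n : ℝ)⁻¹ ∂μ) ^ (n : ℝ) := by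
  have hswapmeas : Measurable (Function.uncurry fun ω u => h u ω) :=
    hmeas.comp measurable_swap
  have hℓ : Measurable fun ω => ∫⁻ u, h u ω ∂μ :=
    Measurable.lintegral_prod_right' (f := fun p : Ω × ℝ => h p.2 p.1) hswapmeas
  set ℓ := fun ω => ∫⁻ u, h u ω ∂μ with hℓdef
  set D := ∫⁻ u, (∫⁻ ω, (h u ω) ^ (n : ℝ) ∂P) ^ (n : ℝ)⁻¹ ∂μ with hD
  rcases eq_or_lt_of_le hn with h1 | h1
  · -- n = 1 : Tonelli
    have hn1 : n = 1 := h1.symm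
    subst hn1
    have : D = ∫⁻ u, ∫⁻ ω, h u ω ∂P ∂μ := by
      rw [hD]
      simp
    rw [this]
    simp only [Nat.cast_one, ENNReal.rpow_one]
    rw [lintegral_lintegral_swap (hswapmeas.aemeasurable)]
  · -- n ≥ 2
    have hnR : (1:ℝ) < (n:ℝ) := by exact_mod_cast h1
    have hn0 : (n:ℝ) ≠ 0 := by positivity
    have hn1ne : (n:ℝ) - 1 ≠ 0 := by linarith
    have key : ∀ N : ℕ, ∫⁻ ω, (min (ℓ ω) N) ^ (n:ℝ) ∂P ≤ D ^ (n:ℝ) := by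
      intro N
      set A := ∫⁻ ω, (min (ℓ ω) N) ^ (n:ℝ) ∂P with hA
      have hmin_meas : Measurable fun ω => min (ℓ ω) (N:ℝ≥0∞) := hℓ.min measurable_const
      have hminfin : ∀ ω, min (ℓ ω) (N:ℝ≥0∞) ≠ ⊤ :=
        fun ω => ne_top_of_le_ne_top (by simp) (min_le_right _ _)
      have hAfin : A ≠ ⊤ := by
        refine ne_of_lt ?_
        calc A ≤ ∫⁻ _ω, (N:ℝ≥0∞) ^ (n:ℝ) ∂P := by
              apply lintegral_mono
              intro ω
              exact ENNReal.rpow_le_rpow (min_le_right _ _) (by positivity)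
          _ = (N:ℝ≥0∞) ^ (n:ℝ) := by rw [lintegral_const, measure_univ, mul_one]
          _ < ⊤ := ENNReal.rpow_lt_top_of_nonneg (by positivity) (by simp)
      have hrw : ∀ ω, (min (ℓ ω) (N:ℝ≥0∞)) ^ ((n:ℝ) - 1) = (min (ℓ ω) N) ^ (n - 1 : ℕ) := by
        intro ω
        rw [← ENNReal.rpow_natCast _ (n - 1)]
        congr 1
        push_cast [Nat.cast_sub hn]
        ring
      have step1 : A ≤ ∫⁻ ω, (min (ℓ ω) N) ^ ((n:ℝ) - 1) * ℓ ω ∂P := by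
        apply lintegral_mono
        intro ω
        dsimp only
        rw [hrw ω, ENNReal.rpow_natCast _ n,
          ← pow_sub_one_mul (by omega : n ≠ 0) (min (ℓ ω) (N:ℝ≥0∞))]
        exact mul_le_mul_right (min_le_left _ _) _
      have step2 : ∫⁻ ω, (min (ℓ ω) N) ^ ((n:ℝ) - 1) * ℓ ω ∂P =
          ∫⁻ u, ∫⁻ ω, (min (ℓ ω) N) ^ ((n:ℝ) - 1) * h u ω ∂P ∂μ := by
        have hfs : ∀ ω, (min (ℓ ω) (N:ℝ≥0∞)) ^ ((n:ℝ) - 1) ≠ ⊤ :=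
          fun ω => ENNReal.rpow_ne_top_of_nonneg (by linarith) (hminfin ω)
        have hinner : ∀ ω, (min (ℓ ω) N) ^ ((n:ℝ) - 1) * ℓ ω =
            ∫⁻ u, (min (ℓ ω) N) ^ ((n:ℝ) - 1) * h u ω ∂μ := by
          intro ω
          rw [lintegral_const_mul' _ _ (hfs ω)]
        rw [lintegral_congr hinner]
        rw [lintegral_lintegral_swap]
        apply AEMeasurable.mul
        · exact (((hmin_meas.comp measurable_fst)).pow_const _).aemeasurable
        · exact hswapmeas.aemeasurable
      have step3 : ∀ u : ℝ, ∫⁻ ω, (min (ℓ ω) N) ^ ((n:ℝ) - 1) * h u ω ∂P ≤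
          (∫⁻ ω, (h u ω) ^ (n:ℝ) ∂P) ^ (n:ℝ)⁻¹ * A ^ (1 - (n:ℝ)⁻¹) := by
        intro u
        have hconj : (n:ℝ).HolderConjugate ((n:ℝ)/((n:ℝ)-1)) := by
          exact (Real.holderConjugate_iff_eq_conjExponent hnR).mpr rfl
        have hfu : AEMeasurable (fun ω => h u ω) P :=
          (hmeas.comp (measurable_prodMk_left (m := _))).aemeasurable
        have hgm : AEMeasurable (fun ω => (min (ℓ ω) (N:ℝ≥0∞)) ^ ((n:ℝ) - 1)) P :=
          (hmin_meas.pow_const _).aemeasurable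
        have hH := ENNReal.lintegral_mul_le_Lp_mul_Lq P hconj hfu hgm
        calc ∫⁻ ω, (min (ℓ ω) N) ^ ((n:ℝ) - 1) * h u ω ∂P
            = ∫⁻ ω, ((fun ω => h u ω) * fun ω => (min (ℓ ω) N) ^ ((n:ℝ) - 1)) ω ∂P := by
              apply lintegral_congr
              intro ω
              simp [mul_comm]
          _ ≤ (∫⁻ ω, (h u ω) ^ (n:ℝ) ∂P) ^ (1/(n:ℝ)) *
                (∫⁻ ω, ((min (ℓ ω) N) ^ ((n:ℝ) - 1)) ^ ((n:ℝ)/((n:ℝ)-1)) ∂P) ^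
                  (1/((n:ℝ)/((n:ℝ)-1))) := hH
          _ = (∫⁻ ω, (h u ω) ^ (n:ℝ) ∂P) ^ (n:ℝ)⁻¹ * A ^ (1 - (n:ℝ)⁻¹) := by
              congr 1
              · rw [one_div]
              · have hexp : ∀ ω, ((min (ℓ ω) (N:ℝ≥0∞)) ^ ((n:ℝ) - 1)) ^ ((n:ℝ)/((n:ℝ)-1)) =
                    (min (ℓ ω) N) ^ (n:ℝ) := by
                  intro ω
                  rw [← ENNReal.rpow_mul]
                  congr 1
                  field_simp
                simp_rw [hexp]
                rw [← hA]
                congr 1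
                rw [one_div, inv_div]
                rw [sub_div, div_self hn0]
                rw [one_div]
      have hsub : (0:ℝ) ≤ 1 - (n:ℝ)⁻¹ := by
        have h' : (1:ℝ) - (n:ℝ)⁻¹ = ((n:ℝ)-1)/n := by field_simp
        rw [h']
        exact div_nonneg (by linarith) (by positivity)
      have hstep : A ≤ D * A ^ (1 - (n:ℝ)⁻¹) := by
        calc A ≤ ∫⁻ u, (∫⁻ ω, (h u ω) ^ (n:ℝ) ∂P) ^ (n:ℝ)⁻¹ * A ^ (1 - (n:ℝ)⁻¹) ∂μ := by
              refine le_trans step1 ?_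
              rw [step2]
              exact lintegral_mono step3
          _ = D * A ^ (1 - (n:ℝ)⁻¹) := by
              rw [lintegral_mul_const' _ _ (ENNReal.rpow_ne_top_of_nonneg hsub hAfin)]
      -- conclude A ≤ D ^ n
      rcases eq_or_ne D ⊤ with hDt | hDt
      · rw [hDt, ENNReal.top_rpow_of_pos (by positivity)]
        exact le_top
      rcases eq_or_ne A 0 with hA0 | hA0
      · rw [hA0]
        exact zero_le
      have hApos : 0 < A := pos_iff_ne_zero.mpr hA0
      have hcancel : A ^ ((n:ℝ)⁻¹) ≤ D := by
        have hfactor : A = A ^ ((n:ℝ)⁻¹) * A ^ (1 - (n:ℝ)⁻¹) := by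
          rw [← ENNReal.rpow_add _ _ hA0 hAfin]
          norm_num
        have h2 : A ^ ((n:ℝ)⁻¹) * A ^ (1 - (n:ℝ)⁻¹) ≤ D * A ^ (1 - (n:ℝ)⁻¹) := by
          rw [← hfactor]
          exact hstep
        have hne0 : A ^ (1 - (n:ℝ)⁻¹) ≠ 0 :=
          ne_of_gt (ENNReal.rpow_pos hApos hAfin)
        have hnet : A ^ (1 - (n:ℝ)⁻¹) ≠ ⊤ :=
          ENNReal.rpow_ne_top_of_nonneg hsub hAfin
        exact (ENNReal.mul_le_mul_iff_left hne0 hnet).mp h2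
      calc A = (A ^ ((n:ℝ)⁻¹)) ^ (n:ℝ) := by
            rw [← ENNReal.rpow_mul, inv_mul_cancel₀ hn0, ENNReal.rpow_one]
        _ ≤ D ^ (n:ℝ) := ENNReal.rpow_le_rpow hcancel (by positivity)
    -- monotone convergence
    have hmc : ∫⁻ ω, (ℓ ω) ^ (n:ℝ) ∂P = ⨆ N : ℕ, ∫⁻ ω, (min (ℓ ω) N) ^ (n:ℝ) ∂P := by
      rw [← lintegral_iSup]
      · apply lintegral_congr
        intro ω
        rw [iSup_min_nat_rpow _ (by exact_mod_cast hn)]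
      · exact fun N => (hℓ.min measurable_const).pow_const _
      · intro N M hNM ω
        exact ENNReal.rpow_le_rpow (min_le_min le_rfl (by exact_mod_cast hNM)) (by positivity)
    rw [hmc]
    exact iSup_le key

lemma fin_sum_rpow_le {ν : ℕ} (a : Fin ν → ℝ≥0∞) {p : ℝ} (hp : 0 < p) :
    (∑ i, a i) ^ p ≤ (ν : ℝ≥0∞) ^ p * ∑ i, (a i) ^ p := by
  rcases Nat.eq_zero_or_pos ν with hν | hν
  · subst hν
    simp [ENNReal.zero_rpow_of_pos hp]
  · have hnemp : Nonempty (Fin ν) := ⟨⟨0, hν⟩⟩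
    have hne : (Finset.univ : Finset (Fin ν)).Nonempty := Finset.univ_nonempty
    set M := Finset.univ.sup a with hM
    obtain ⟨i₀, _, hi₀⟩ := Finset.exists_mem_eq_sup Finset.univ hne a
    have hsum : ∑ i, a i ≤ (ν : ℝ≥0∞) * M := by
      calc ∑ i, a i ≤ (Finset.univ : Finset (Fin ν)).card • M :=
            Finset.sum_le_card_nsmul _ _ _ (fun i _ => Finset.le_sup (Finset.mem_univ i))
        _ = (ν : ℝ≥0∞) * M := by
            rw [nsmul_eq_mul, Finset.card_univ, Fintype.card_fin]
    calc (∑ i, a i) ^ p ≤ ((ν : ℝ≥0∞) * M) ^ p := ENNReal.rpow_le_rpow hsum hp.le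
      _ = (ν : ℝ≥0∞) ^ p * M ^ p := ENNReal.mul_rpow_of_nonneg _ _ hp.le
      _ ≤ (ν : ℝ≥0∞) ^ p * ∑ i, (a i) ^ p := by
          gcongr
          calc M ^ p = a i₀ ^ p := by rw [hM, hi₀]
            _ ≤ ∑ i, a i ^ p :=
              Finset.single_le_sum (fun i _ => (zero_le : 0 ≤ a i ^ p)) (Finset.mem_univ i₀)



lemma lintegral_norm_rpow_of_gauss {ν : ℕ} {Ω : Type*} [MeasurableSpace Ω] (P : Measure Ω)
    [IsProbabilityMeasure P] {X : Ω → Fin ν → ℝ} (hX : Measurable X) {V : ℝ≥0}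
    (hlaw : Measure.map X P = Measure.pi fun _ : Fin ν => gaussianReal 0 V)
    {p : ℝ} (hp : 0 < p) :
    ∫⁻ ω, (ENNReal.ofReal ‖eLn ν (X ω)‖) ^ p ∂P ≤
      (ν : ℝ≥0∞) ^ p * ν * (ENNReal.ofReal (Real.sqrt V ^ p) * gmom p) := by
  have hpt : ∀ ω, (ENNReal.ofReal ‖eLn ν (X ω)‖) ^ p ≤
      (ν : ℝ≥0∞) ^ p * ∑ i, (ENNReal.ofReal (|X ω i|)) ^ p := by
    intro ω
    have h1 : ENNReal.ofReal ‖eLn ν (X ω)‖ ≤ ∑ i, ENNReal.ofReal (|X ω i|) := by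
      rw [← ENNReal.ofReal_sum_of_nonneg (fun i _ => abs_nonneg _)]
      exact ENNReal.ofReal_le_ofReal (norm_eLn_le_sum_abs _)
    calc (ENNReal.ofReal ‖eLn ν (X ω)‖) ^ p ≤ (∑ i, ENNReal.ofReal (|X ω i|)) ^ p :=
          ENNReal.rpow_le_rpow h1 hp.le
      _ ≤ _ := fin_sum_rpow_le _ hp
  calc ∫⁻ ω, (ENNReal.ofReal ‖eLn ν (X ω)‖) ^ p ∂P
      ≤ ∫⁻ ω, (ν : ℝ≥0∞) ^ p * ∑ i, (ENNReal.ofReal (|X ω i|)) ^ p ∂P := lintegral_mono hpt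
    _ = (ν : ℝ≥0∞) ^ p * ∑ i, ∫⁻ ω, (ENNReal.ofReal (|X ω i|)) ^ p ∂P := by
        rw [lintegral_const_mul' _ _ (ENNReal.rpow_ne_top_of_nonneg hp.le (by simp))]
        congr 1
        apply lintegral_finset_sum'
        intro i _
        exact ((((measurable_pi_apply i).comp hX).abs).ennreal_ofReal.pow_const _).aemeasurable
    _ ≤ _ := by
        have hcoord : ∀ i : Fin ν, ∫⁻ ω, (ENNReal.ofReal (|X ω i|)) ^ p ∂P =
            ENNReal.ofReal (Real.sqrt V ^ p) * gmom p := by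
          intro i
          have heq : ∀ ω, (ENNReal.ofReal (|X ω i|)) ^ p = ENNReal.ofReal (|X ω i| ^ p) :=
            fun ω => ENNReal.ofReal_rpow_of_nonneg (abs_nonneg _) hp.le
          simp_rw [heq]
          have hXi : Measurable fun ω => X ω i := (measurable_pi_apply i).comp hX
          have hmap : Measure.map (fun ω => X ω i) P = gaussianReal 0 V := by
            have : (fun ω => X ω i) = Function.eval i ∘ X := rfl
            rw [this, ← Measure.map_map (measurable_pi_apply i) hX, hlaw, pi_map_eval]
          calc ∫⁻ ω, ENNReal.ofReal (|X ω i| ^ p) ∂P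
              = ∫⁻ x, ENNReal.ofReal (|x| ^ p) ∂(Measure.map (fun ω => X ω i) P) :=
                (lintegral_map (measurable_abs.pow_const p).ennreal_ofReal hXi).symm
            _ = ENNReal.ofReal (Real.sqrt V ^ p) * gmom p := by
                rw [hmap]
                exact lintegral_abs_rpow_gaussianReal hp V
        rw [mul_assoc]
        gcongr
        rw [Finset.sum_congr rfl (fun i _ => hcoord i), Finset.sum_const, Finset.card_univ,
          Fintype.card_fin, nsmul_eq_mul]


/-- A `ν`-dimensional Brownian motion `B` on a filtered probability space
`(Ω, m, (ℱ_t), P)` satisfying the usual conditions: the filtration is complete and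
right-continuous, `B` has continuous paths on `[0,∞)` with `B_0 = 0`, `B` is adapted, and
for `0 ≤ s ≤ t` the increment `B_t − B_s` is independent of `ℱ_s` and is a centered
Gaussian vector with covariance matrix `(t−s)·Id` (componentwise iid `N(0, t−s)`). -/
structure IsBrownianMotion {Ω : Type*} [m : MeasurableSpace Ω] (P : Measure Ω) (ν : ℕ)
    (F : Filtration ℝ m) (B : ℝ → Ω → Fin ν → ℝ) : Prop where
  complete : ∀ (t : ℝ) (A : Set Ω), P A = 0 → MeasurableSet[F t] A
  rightCont : ∀ t : ℝ, (F t : MeasurableSpace Ω) = ⨅ s ∈ Set.Ioi t, (F s : MeasurableSpace Ω)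
  contPaths : ∀ ω : Ω, ContinuousOn (fun t => B t ω) (Set.Ici 0)
  start : ∀ ω : Ω, B 0 ω = 0
  adapted : ∀ t : ℝ, Measurable[F t] (B t)
  indepIncr : ∀ s t : ℝ, 0 ≤ s → s ≤ t →
    Indep (MeasurableSpace.comap (fun ω => B t ω - B s ω) inferInstance) (F s) P
  gaussIncr : ∀ s t : ℝ, 0 ≤ s → s ≤ t →
    Measure.map (fun ω => B t ω - B s ω) P =
      Measure.pi fun _ : Fin ν => gaussianReal 0 (Real.toNNReal (t - s))

/-- The Brownian bridge from `q` to `y` in time `T` driven by the path `B`: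
`b_t = (t/T)y + ((T−t)/T)q + B_t − (T−t)∫₀ᵗ (T−s)⁻² B_s ds` for `t < T`, and `b_t = y`
otherwise (in particular `b_T = y`). -/
noncomputable def bridgeBB (ν : ℕ) (T : ℝ) (q y : Fin ν → ℝ) (B : ℝ → Fin ν → ℝ)
    (t : ℝ) : Fin ν → ℝ :=
  if t < T then
    (t / T) • y + ((T - t) / T) • q + B t -
      (T - t) • ∫ s in (0 : ℝ)..t, ((T - s) ^ 2)⁻¹ • B s
  else y

lemma bridge_drift_bound {ν : ℕ} {T s : ℝ} (hT : 0 < T) (hs0 : 0 ≤ s) (hsT : s < T)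
    (q y : Fin ν → ℝ) (W : ℝ → Fin ν → ℝ) (hW : ContinuousOn W (Set.Ici 0)) :
    ‖eLn ν ((T - s)⁻¹ • (y - bridgeBB ν T q y W s))‖ ≤
      T⁻¹ * ‖eLn ν (q - y)‖ + T⁻¹ * ‖eLn ν (W s)‖ +
        ∫ u in (0:ℝ)..s, ((T - u) ^ 2)⁻¹ * ‖eLn ν (W s - W u)‖ := by
  have huIcc : Set.uIcc (0:ℝ) s = Set.Icc 0 s := Set.uIcc_of_le hs0
  have hsubset : Set.uIcc (0:ℝ) s ⊆ Set.Ici 0 := by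
    rw [huIcc]
    exact fun x hx => hx.1
  have hTu : ∀ u ∈ Set.uIcc (0:ℝ) s, T - u ≠ 0 := by
    intro u hu
    rw [huIcc] at hu
    have := hu.2
    intro hc
    nlinarith
  have hWc : ContinuousOn W (Set.uIcc (0:ℝ) s) := hW.mono hsubset
  have hφc : ContinuousOn (fun u : ℝ => ((T - u) ^ 2)⁻¹) (Set.uIcc (0:ℝ) s) := by
    apply ContinuousOn.inv₀
    · exact ((continuousOn_const.sub continuousOn_id).pow 2)
    · intro u hu
      exact pow_ne_zero 2 (hTu u hu)
  have hInt1 : IntervalIntegrable (fun u => ((T - u) ^ 2)⁻¹ • W u) volume 0 s :=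
    (hφc.smul hWc).intervalIntegrable
  have hInt2 : IntervalIntegrable (fun u => ((T - u) ^ 2)⁻¹ • W s) volume 0 s :=
    (hφc.smul continuousOn_const).intervalIntegrable
  have hInt3 : IntervalIntegrable (fun u => ((T - u) ^ 2)⁻¹ • (W s - W u)) volume 0 s :=
    (hφc.smul (continuousOn_const.sub hWc)).intervalIntegrable
  have hφint : (∫ u in (0:ℝ)..s, ((T - u) ^ 2)⁻¹) = (T - s)⁻¹ - T⁻¹ := by
    have hderiv : ∀ u ∈ Set.uIcc (0:ℝ) s,
        HasDerivAt (fun u : ℝ => (T - u)⁻¹) (((T - u) ^ 2)⁻¹) u := by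
      intro u hu
      have h1 : HasDerivAt (fun u : ℝ => T - u) (-1) u := by
        simpa using (hasDerivAt_id u).const_sub T
      have h2 := h1.inv (hTu u hu)
      refine h2.congr_deriv ?_
      ring
    rw [intervalIntegral.integral_eq_sub_of_hasDerivAt hderiv hφc.intervalIntegrable]
    simp
  set J2 := ∫ u in (0:ℝ)..s, ((T - u) ^ 2)⁻¹ • (W s - W u) with hJ2
  have hY : (T - s)⁻¹ • (y - bridgeBB ν T q y W s) =
      T⁻¹ • (y - q) - T⁻¹ • W s - J2 := by
    rw [bridgeBB, if_pos hsT]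
    have hJsplit : (∫ u in (0:ℝ)..s, ((T - u) ^ 2)⁻¹ • W u) =
        ((T - s)⁻¹ - T⁻¹) • W s - J2 := by
      have heq : ∀ u : ℝ, ((T - u) ^ 2)⁻¹ • W u =
          ((T - u) ^ 2)⁻¹ • W s - ((T - u) ^ 2)⁻¹ • (W s - W u) := by
        intro u
        rw [← smul_sub]
        congr 1
        abel
      rw [intervalIntegral.integral_congr (fun u _ => heq u)]
      rw [intervalIntegral.integral_sub hInt2 hInt3]
      rw [intervalIntegral.integral_smul_const, hφint]
    rw [hJsplit]
    have hTs : T - s ≠ 0 := by intro hc; nlinarith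
    match_scalars <;> field_simp <;> ring
  rw [hY]
  have hmap : eLn ν (T⁻¹ • (y - q) - T⁻¹ • W s - J2) =
      T⁻¹ • eLn ν (y - q) - T⁻¹ • eLn ν (W s) - eLn ν J2 := by
    simp [map_sub, _root_.map_smul]
  rw [hmap]
  have htri : ‖T⁻¹ • eLn ν (y - q) - T⁻¹ • eLn ν (W s) - eLn ν J2‖ ≤
      ‖T⁻¹ • eLn ν (y - q)‖ + ‖T⁻¹ • eLn ν (W s)‖ + ‖eLn ν J2‖ :=
    le_trans (norm_sub_le _ _) (by gcongr; exact norm_sub_le _ _)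
  refine le_trans htri ?_
  have h1 : ‖T⁻¹ • eLn ν (y - q)‖ = T⁻¹ * ‖eLn ν (q - y)‖ := by
    rw [norm_smul, Real.norm_eq_abs, abs_of_nonneg (by positivity)]
    congr 1
    have : y - q = -(q - y) := by abel
    rw [this, map_neg, norm_neg]
  have h2 : ‖T⁻¹ • eLn ν (W s)‖ = T⁻¹ * ‖eLn ν (W s)‖ := by
    rw [norm_smul, Real.norm_eq_abs, abs_of_nonneg (by positivity)]
  have h3 : ‖eLn ν J2‖ ≤ ∫ u in (0:ℝ)..s, ((T - u) ^ 2)⁻¹ * ‖eLn ν (W s - W u)‖ := by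
    rw [hJ2, ← ContinuousLinearMap.intervalIntegral_comp_comm _ hInt3]
    refine le_trans (intervalIntegral.norm_integral_le_integral_norm hs0) ?_
    apply le_of_eq
    apply intervalIntegral.integral_congr
    intro u _
    simp only [_root_.map_smul, norm_smul, Real.norm_eq_abs]
    rw [abs_of_nonneg (a := ((T - u) ^ 2)⁻¹) (by positivity)]
  rw [h1, h2]
  linarith


section BMfacts

variable {ν : ℕ} {Ω : Type} [m : MeasurableSpace Ω] {P : Measure Ω} [IsProbabilityMeasure P]
  {F : Filtration ℝ m} {B : ℝ → Ω → Fin ν → ℝ}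

lemma bm_uncurry_meas (hBM : IsBrownianMotion P ν F B) :
    Measurable (Function.uncurry fun (u : ℝ) (ω : Ω) => B (max u 0) ω) := by
  apply StronglyMeasurable.measurable
  apply stronglyMeasurable_uncurry_of_continuous_of_stronglyMeasurable
  · intro ω
    exact (hBM.contPaths ω).comp_continuous (continuous_id.max continuous_const)
      (fun u => le_max_right u 0)
  · intro u
    exact ((hBM.adapted (max u 0)).mono (F.le _) le_rfl).stronglyMeasurable

lemma bm_h_meas (hBM : IsBrownianMotion P ν F B) (T s : ℝ) :
    Measurable (Function.uncurry fun (u : ℝ) (ω : Ω) =>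
      ENNReal.ofReal (((T - u) ^ 2)⁻¹ * ‖eLn ν (B (max s 0) ω - B (max u 0) ω)‖)) := by
  have hBt := bm_uncurry_meas hBM
  have h1 : Measurable fun p : ℝ × Ω => B (max s 0) p.2 - B (max p.1 0) p.2 := by
    have hs : Measurable fun p : ℝ × Ω => B (max s 0) p.2 :=
      (((hBM.adapted (max s 0)).mono (F.le _) le_rfl)).comp measurable_snd
    exact hs.sub hBt
  have h2 : Measurable fun p : ℝ × Ω => ‖eLn ν (B (max s 0) p.2 - B (max p.1 0) p.2)‖ :=
    ((eLn ν).continuous.norm).measurable.comp h1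
  have h3 : Measurable fun p : ℝ × Ω => ((T - p.1) ^ 2)⁻¹ :=
    (((measurable_const.sub measurable_fst).pow_const 2)).inv
  exact (h3.mul h2).ennreal_ofReal

lemma bm_law (hBM : IsBrownianMotion P ν F B) {u s : ℝ} (hu : 0 ≤ u) (hus : u ≤ s) :
    Measure.map (fun ω => B s ω - B u ω) P =
      Measure.pi fun _ : Fin ν => gaussianReal 0 (Real.toNNReal (s - u)) :=
  hBM.gaussIncr u s hu hus

lemma bm_meas (hBM : IsBrownianMotion P ν F B) (t : ℝ) : Measurable (B t) :=
  (hBM.adapted t).mono (F.le t) le_rfl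

/-- moment bound for the increment norm -/
lemma bm_incr_moment (hBM : IsBrownianMotion P ν F B) {u s : ℝ} (hu : 0 ≤ u) (hus : u ≤ s)
    {p : ℝ} (hp : 0 < p) :
    ∫⁻ ω, (ENNReal.ofReal ‖eLn ν (B s ω - B u ω)‖) ^ p ∂P ≤
      (ν : ℝ≥0∞) ^ p * ν * (ENNReal.ofReal (Real.sqrt (s - u) ^ p) * gmom p) := by
  have hX : Measurable fun ω => B s ω - B u ω := (bm_meas hBM s).sub (bm_meas hBM u)
  have := lintegral_norm_rpow_of_gauss P hX (bm_law hBM hu hus) hp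
  refine le_trans this ?_
  have : Real.sqrt (Real.toNNReal (s - u)) = Real.sqrt (s - u) := by
    rw [Real.coe_toNNReal _ (by linarith)]
  rw [this]

lemma ell_moment (hBM : IsBrownianMotion P ν F B) {T s : ℝ} (hT : 0 < T) (hs0 : 0 ≤ s)
    (hsT : s < T) {n : ℕ} (hn : 1 ≤ n) :
    ∫⁻ ω, (∫⁻ u in Set.Ioc (0:ℝ) s,
        ENNReal.ofReal (((T - u) ^ 2)⁻¹ * ‖eLn ν (B (max s 0) ω - B (max u 0) ω)‖)) ^
          ((2 * n : ℕ) : ℝ) ∂P ≤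
      ((ν : ℝ≥0∞) ^ ((2 * n : ℕ) : ℝ) * ν * gmom ((2 * n : ℕ) : ℝ)) *
        ENNReal.ofReal ((2 * (T - s) ^ (-(1/2) : ℝ)) ^ ((2 * n : ℕ) : ℝ)) := by
  set m2 : ℕ := 2 * n with hm2
  have hm2one : 1 ≤ m2 := by omega
  have hm2R : (0:ℝ) < (m2 : ℝ) := by positivity
  set G2 : ℝ≥0∞ := (ν : ℝ≥0∞) ^ ((m2 : ℕ) : ℝ) * ν * gmom ((m2 : ℕ) : ℝ) with hG2
  set G1 : ℝ≥0∞ := G2 ^ ((m2 : ℝ))⁻¹ with hG1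
  set h : ℝ → Ω → ℝ≥0∞ := fun u ω =>
    ENNReal.ofReal (((T - u) ^ 2)⁻¹ * ‖eLn ν (B (max s 0) ω - B (max u 0) ω)‖) with hh
  have hmeas : Measurable (Function.uncurry h) := bm_h_meas hBM T s
  have hmink := lintegral_lintegral_pow_le P (volume.restrict (Set.Ioc (0:ℝ) s)) h hmeas hm2one
  refine le_trans hmink ?_
  -- bound the inner M u for u ∈ Ioc 0 s
  have hMu : ∀ u ∈ Set.Ioc (0:ℝ) s,
      (∫⁻ ω, (h u ω) ^ ((m2:ℕ) : ℝ) ∂P) ^ ((m2:ℝ))⁻¹ ≤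
        G1 * ENNReal.ofReal ((T - u) ^ (-(3/2) : ℝ)) := by
    intro u hu
    have hu0 : 0 ≤ u := hu.1.le
    have hus : u ≤ s := hu.2
    have hTu : 0 < T - u := by linarith
    have hmax_u : max u 0 = u := max_eq_left hu0
    have hmax_s : max s 0 = s := max_eq_left hs0
    have hφnn : (0:ℝ) ≤ ((T - u) ^ 2)⁻¹ := by positivity
    have hsplit : ∀ ω, h u ω = ENNReal.ofReal (((T - u) ^ 2)⁻¹) *
        ENNReal.ofReal ‖eLn ν (B s ω - B u ω)‖ := by
      intro ω
      rw [hh]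
      dsimp only
      rw [hmax_u, hmax_s, ENNReal.ofReal_mul hφnn]
    have hstep : ∫⁻ ω, (h u ω) ^ ((m2:ℕ) : ℝ) ∂P ≤
        ENNReal.ofReal (((T - u) ^ 2)⁻¹) ^ ((m2:ℕ) : ℝ) *
          ((ν : ℝ≥0∞) ^ ((m2:ℕ) : ℝ) * ν *
            (ENNReal.ofReal (Real.sqrt (s - u) ^ ((m2:ℕ) : ℝ)) * gmom ((m2:ℕ) : ℝ))) := by
      have : ∀ ω, (h u ω) ^ ((m2:ℕ) : ℝ) = ENNReal.ofReal (((T - u) ^ 2)⁻¹) ^ ((m2:ℕ) : ℝ) *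
          (ENNReal.ofReal ‖eLn ν (B s ω - B u ω)‖) ^ ((m2:ℕ) : ℝ) := by
        intro ω
        rw [hsplit ω, ENNReal.mul_rpow_of_nonneg _ _ (by positivity)]
      simp_rw [this]
      rw [lintegral_const_mul' _ _ (ENNReal.rpow_ne_top_of_nonneg (by positivity)
        ENNReal.ofReal_ne_top)]
      exact mul_le_mul_right (bm_incr_moment hBM hu0 hus hm2R) _
    calc (∫⁻ ω, (h u ω) ^ ((m2:ℕ) : ℝ) ∂P) ^ ((m2:ℝ))⁻¹
        ≤ (ENNReal.ofReal (((T - u) ^ 2)⁻¹) ^ ((m2:ℕ) : ℝ) *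
            (G2 * ENNReal.ofReal (Real.sqrt (s - u) ^ ((m2:ℕ) : ℝ)))) ^ ((m2:ℝ))⁻¹ := by
          apply ENNReal.rpow_le_rpow _ (by positivity)
          refine le_trans hstep (le_of_eq ?_)
          rw [hG2]
          ring
      _ = ENNReal.ofReal (((T - u) ^ 2)⁻¹) * (G1 * ENNReal.ofReal (Real.sqrt (s - u))) := by
          rw [ENNReal.mul_rpow_of_nonneg _ _ (by positivity),
            ENNReal.mul_rpow_of_nonneg _ _ (by positivity)]
          congr 1
          · rw [← ENNReal.rpow_mul]
            rw [mul_inv_cancel₀ (ne_of_gt hm2R), ENNReal.rpow_one]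
          · congr 1
            rw [← ENNReal.ofReal_rpow_of_nonneg (Real.sqrt_nonneg _) (by positivity),
              ← ENNReal.rpow_mul, mul_inv_cancel₀ (ne_of_gt hm2R), ENNReal.rpow_one]
      _ ≤ G1 * ENNReal.ofReal ((T - u) ^ (-(3/2) : ℝ)) := by
          have h1 : Real.sqrt (s - u) ≤ Real.sqrt (T - u) := Real.sqrt_le_sqrt (by linarith)
          have h2 : ((T - u) ^ 2)⁻¹ * Real.sqrt (T - u) = (T - u) ^ (-(3/2) : ℝ) := by
            rw [Real.sqrt_eq_rpow]
            rw [show ((T - u) ^ 2)⁻¹ = (T - u) ^ (-(2:ℝ)) by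
              rw [← Real.rpow_natCast (T - u) 2, ← Real.rpow_neg hTu.le]
              norm_num]
            rw [← Real.rpow_add hTu]
            norm_num
          calc ENNReal.ofReal (((T - u) ^ 2)⁻¹) * (G1 * ENNReal.ofReal (Real.sqrt (s - u)))
              = G1 * (ENNReal.ofReal (((T - u) ^ 2)⁻¹) * ENNReal.ofReal (Real.sqrt (s - u))) := by
                ring
            _ = G1 * ENNReal.ofReal (((T - u) ^ 2)⁻¹ * Real.sqrt (s - u)) := by
                rw [ENNReal.ofReal_mul hφnn]
            _ ≤ G1 * ENNReal.ofReal ((T - u) ^ (-(3/2) : ℝ)) := by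
                gcongr
                rw [← h2]
                exact mul_le_mul_of_nonneg_left h1 hφnn
  -- bound the outer integral
  have hG2top : G2 ≠ ⊤ := by
    rw [hG2]
    apply ENNReal.mul_ne_top
    apply ENNReal.mul_ne_top
    · exact ENNReal.rpow_ne_top_of_nonneg (by positivity) (by simp)
    · simp
    · exact gmom_ne_top (by positivity)
  have hG1top : G1 ≠ ⊤ := ENNReal.rpow_ne_top_of_nonneg (by positivity) hG2top
  have hTsTop : 0 < T - s := by linarith
  have hFTC : (∫ u in (0:ℝ)..s, (T - u) ^ (-(3/2) : ℝ)) =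
      2 * (T - s) ^ (-(1/2) : ℝ) - 2 * T ^ (-(1/2) : ℝ) := by
    have hTu' : ∀ u ∈ Set.uIcc (0:ℝ) s, 0 < T - u := by
      intro u hu
      rw [Set.uIcc_of_le hs0] at hu
      have := hu.2
      linarith
    have hderiv : ∀ u ∈ Set.uIcc (0:ℝ) s,
        HasDerivAt (fun u : ℝ => 2 * (T - u) ^ (-(1/2) : ℝ)) ((T - u) ^ (-(3/2) : ℝ)) u := by
      intro u hu
      have h0 : HasDerivAt (fun x : ℝ => x ^ (-(1/2) : ℝ))
          (-(1/2) * (T - u) ^ (-(1/2) - 1 : ℝ)) (T - u) :=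
        Real.hasDerivAt_rpow_const (Or.inl (ne_of_gt (hTu' u hu)))
      have h1 : HasDerivAt (fun u : ℝ => T - u) (-1) u := by
        simpa using (hasDerivAt_id u).const_sub T
      have h2 := (h0.comp u h1).const_mul (2:ℝ)
      refine h2.congr_deriv ?_
      rw [show (-(1/2) - 1 : ℝ) = -(3/2) by norm_num]
      ring
    have hcont : ContinuousOn (fun u : ℝ => (T - u) ^ (-(3/2) : ℝ)) (Set.uIcc (0:ℝ) s) := by
      apply ContinuousOn.rpow_const
      · exact continuousOn_const.sub continuousOn_id
      · intro u hu
        exact Or.inl (ne_of_gt (hTu' u hu))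
    rw [intervalIntegral.integral_eq_sub_of_hasDerivAt hderiv hcont.intervalIntegrable]
    simp
  have houter : (∫⁻ u in Set.Ioc (0:ℝ) s,
      (∫⁻ ω, (h u ω) ^ ((m2:ℕ) : ℝ) ∂P) ^ ((m2:ℝ))⁻¹) ≤
        G1 * ENNReal.ofReal (2 * (T - s) ^ (-(1/2) : ℝ)) := by
    have hb1 : (∫⁻ u in Set.Ioc (0:ℝ) s, (∫⁻ ω, (h u ω) ^ ((m2:ℕ) : ℝ) ∂P) ^ ((m2:ℝ))⁻¹) ≤
        ∫⁻ u in Set.Ioc (0:ℝ) s, G1 * ENNReal.ofReal ((T - u) ^ (-(3/2) : ℝ)) := by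
      apply lintegral_mono_ae
      rw [ae_restrict_iff' measurableSet_Ioc]
      exact Filter.Eventually.of_forall hMu
    refine le_trans hb1 ?_
    rw [lintegral_const_mul' _ _ hG1top]
    gcongr
    have hcont2 : ContinuousOn (fun u : ℝ => (T - u) ^ (-(3/2) : ℝ)) (Set.Icc (0:ℝ) s) := by
      apply ContinuousOn.rpow_const
      · exact continuousOn_const.sub continuousOn_id
      · intro u hu
        have := hu.2
        exact Or.inl (ne_of_gt (by linarith : (0:ℝ) < T - u))
    have hIntOn : IntegrableOn (fun u : ℝ => (T - u) ^ (-(3/2) : ℝ)) (Set.Ioc 0 s) volume :=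
      (hcont2.integrableOn_Icc).mono_set Set.Ioc_subset_Icc_self
    have hnn : 0 ≤ᶠ[ae (volume.restrict (Set.Ioc (0:ℝ) s))]
        fun u : ℝ => (T - u) ^ (-(3/2) : ℝ) := by
      have : ∀ᵐ u ∂(volume.restrict (Set.Ioc (0:ℝ) s)), 0 ≤ (T - u) ^ (-(3/2) : ℝ) := by
        rw [ae_restrict_iff' measurableSet_Ioc]
        apply Filter.Eventually.of_forall
        intro u hu
        have h2 : (0:ℝ) < T - u := by
          have := hu.2
          linarith
        positivity
      exact this
    rw [← ofReal_integral_eq_lintegral_ofReal hIntOn hnn]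
    apply ENNReal.ofReal_le_ofReal
    rw [← intervalIntegral.integral_of_le hs0, hFTC]
    have : 0 ≤ 2 * T ^ (-(1/2) : ℝ) := by positivity
    linarith
  calc (∫⁻ u in Set.Ioc (0:ℝ) s, (∫⁻ ω, (h u ω) ^ ((m2:ℕ) : ℝ) ∂P) ^ ((m2:ℝ))⁻¹) ^ ((m2:ℕ) : ℝ)
      ≤ (G1 * ENNReal.ofReal (2 * (T - s) ^ (-(1/2) : ℝ))) ^ ((m2:ℕ) : ℝ) :=
        ENNReal.rpow_le_rpow houter (by positivity)
    _ = G2 * ENNReal.ofReal ((2 * (T - s) ^ (-(1/2) : ℝ)) ^ ((m2:ℕ) : ℝ)) := by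
        rw [ENNReal.mul_rpow_of_nonneg _ _ (by positivity)]
        congr 1
        · rw [hG1, ← ENNReal.rpow_mul, inv_mul_cancel₀ (ne_of_gt hm2R), ENNReal.rpow_one]
        · exact ENNReal.ofReal_rpow_of_nonneg (by positivity) (by positivity)

end BMfacts


/-- For every `κ > 0` there is a constant `C = C(ν,κ,T) > 0`, depending
only on `ν`, `κ` and `T`, such that for every filtered probability space carrying a
`ν`-dimensional Brownian motion, every `y` and every `ℱ₀`-measurable `q` with all moments
finite, the drift `Y_s = (y − b_s)/(T−s)` of the bridge from `q` to `y` in time `T`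
satisfies `∫₀ᵀ (T−s)^κ E[|Y_s|^{2κ}] ds ≤ C · E[(1+|q−y|)^{2κ}]` (Euclidean norms, and
`|Y_s|^{2κ} = (∑ᵢ Y_s(i)²)^κ`). -/
theorem statement10 (ν : ℕ) (hν : 0 < ν) (κ T : ℝ) (hκ : 0 < κ) (hT : 0 < T) :
    ∃ C : ℝ, 0 < C ∧
      ∀ (Ω : Type) (m : MeasurableSpace Ω) (P : Measure Ω), IsProbabilityMeasure P →
        ∀ (F : Filtration ℝ m) (B : ℝ → Ω → Fin ν → ℝ), IsBrownianMotion P ν F B →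
          ∀ (y : Fin ν → ℝ) (q : Ω → Fin ν → ℝ), Measurable[F 0] q →
            (∀ n : ℕ, Integrable (fun ω => Real.sqrt (∑ i, q ω i ^ 2) ^ n) P) →
            (∫ s in (0 : ℝ)..T, (T - s) ^ κ *
                ∫ ω, (∑ i,
                    ((T - s)⁻¹ • (y - bridgeBB ν T (q ω) y (fun u => B u ω) s)) i ^ 2) ^ κ
                  ∂P) ≤
              C * ∫ ω, (1 + Real.sqrt (∑ i, (q ω i - y i) ^ 2)) ^ (2 * κ) ∂P := by
  classical
  have hκ2 : (0:ℝ) < 2 * κ := by linarith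
  set n : ℕ := max 1 ⌈κ⌉₊ with hn
  have hn1 : 1 ≤ n := le_max_left _ _
  have hnR : (0:ℝ) < (n:ℝ) := by
    have : (1:ℕ) ≤ n := hn1
    exact_mod_cast Nat.lt_of_lt_of_le Nat.zero_lt_one this
  have hκn : κ ≤ (n:ℝ) := by
    calc κ ≤ (⌈κ⌉₊ : ℝ) := Nat.le_ceil κ
      _ ≤ (n : ℝ) := by exact_mod_cast le_max_right 1 ⌈κ⌉₊
  set m2 : ℕ := 2 * n with hm2
  set θ : ℝ := κ / (n:ℝ) with hθ
  have hθ0 : 0 < θ := div_pos hκ hnR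
  have hθ1 : θ ≤ 1 := by
    rw [hθ, div_le_one hnR]
    exact hκn
  have hm2θ : (m2:ℝ) * θ = 2 * κ := by
    rw [hθ, hm2]
    push_cast
    field_simp
  set G2 : ℝ≥0∞ := (ν : ℝ≥0∞) ^ ((m2 : ℕ) : ℝ) * ν * gmom ((m2 : ℕ) : ℝ) with hG2
  set K2 : ℝ≥0∞ := (ν : ℝ≥0∞) ^ (2*κ) * ν *
    (ENNReal.ofReal (Real.sqrt T ^ (2*κ)) * gmom (2*κ)) with hK2
  set c1 : ℝ≥0∞ := (ENNReal.ofReal T⁻¹) ^ (2*κ) with hc1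
  set cT : ℝ≥0∞ := ENNReal.ofReal (T ^ κ) * c1 with hcT
  set C3 : ℝ≥0∞ := G2 ^ θ * ENNReal.ofReal ((2:ℝ) ^ (2*κ)) with hC3
  set Kfin : ℝ≥0∞ := (3:ℝ≥0∞) ^ (2*κ) * (cT * (1 + K2) + C3) with hKfin
  have hG2top : G2 ≠ ⊤ := by
    rw [hG2]
    apply ENNReal.mul_ne_top
    apply ENNReal.mul_ne_top
    · exact ENNReal.rpow_ne_top_of_nonneg (by positivity) (by simp)
    · simp
    · exact gmom_ne_top (by positivity)
  have hK2top : K2 ≠ ⊤ := by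
    rw [hK2]
    apply ENNReal.mul_ne_top
    apply ENNReal.mul_ne_top
    · exact ENNReal.rpow_ne_top_of_nonneg (by positivity) (by simp)
    · simp
    · exact ENNReal.mul_ne_top ENNReal.ofReal_ne_top (gmom_ne_top (by positivity))
  have hKfintop : Kfin ≠ ⊤ := by
    rw [hKfin]
    apply ENNReal.mul_ne_top
    · exact ENNReal.rpow_ne_top_of_nonneg (by positivity) (by simp)
    apply ENNReal.add_ne_top.mpr
    constructor
    · apply ENNReal.mul_ne_top
      · exact ENNReal.mul_ne_top ENNReal.ofReal_ne_top
          (ENNReal.rpow_ne_top_of_nonneg (by positivity) ENNReal.ofReal_ne_top)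
      · exact ENNReal.add_ne_top.mpr ⟨by simp, hK2top⟩
    · rw [hC3]
      exact ENNReal.mul_ne_top (ENNReal.rpow_ne_top_of_nonneg hθ0.le hG2top)
        ENNReal.ofReal_ne_top
  refine ⟨T * Kfin.toReal + 1, by nlinarith [ENNReal.toReal_nonneg (a := Kfin)], ?_⟩
  intro Ω m P hP F B hBM y q hq hqmom
  set C : ℝ := T * Kfin.toReal + 1 with hC
  have hqmeas : Measurable q := hq.mono (F.le 0) le_rfl
  set ρ : Ω → ℝ := fun ω => ‖eLn ν (q ω - y)‖ with hρdef
  have hρ : ∀ ω, Real.sqrt (∑ i, (q ω i - y i)^2) = ρ ω := by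
    intro ω
    show _ = ‖eLn ν (q ω - y)‖
    rw [← sqrt_sum_sq_eq_norm_eLn (q ω - y)]
    congr 1
  have hρmeas : Measurable ρ := ((eLn ν).continuous.norm).measurable.comp
    ((hqmeas.sub measurable_const))
  have hρnn : ∀ ω, 0 ≤ ρ ω := fun ω => norm_nonneg _
  -- integrability of the RHS integrand
  have hqnorm : ∀ k : ℕ, Integrable (fun ω => ‖eLn ν (q ω)‖ ^ k) P := by
    intro k
    apply (hqmom k).congr
    apply Filter.Eventually.of_forall
    intro ω
    dsimp only
    rw [sqrt_sum_sq_eq_norm_eLn]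
  have hRint : Integrable (fun ω => (1 + ρ ω) ^ (2 * κ)) P := by
    set c : ℝ := 1 + ‖eLn ν y‖ with hc
    have hc1' : (1:ℝ) ≤ c := by
      rw [hc]
      have := norm_nonneg (eLn ν y)
      linarith
    have hbound : ∀ ω, ‖(1 + ρ ω) ^ (2 * κ)‖ ≤ (c + ‖eLn ν (q ω)‖) ^ m2 := by
      intro ω
      rw [Real.norm_eq_abs, abs_of_nonneg (Real.rpow_nonneg (by linarith [hρnn ω]) _)]
      have h1 : (1 + ρ ω) ^ (2*κ) ≤ (1 + ρ ω) ^ ((m2:ℕ):ℝ) := by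
        apply Real.rpow_le_rpow_of_exponent_le (by linarith [hρnn ω])
        rw [← hm2θ]
        nlinarith [hθ1, hθ0.le, hm2θ]
      have h2 : (1 + ρ ω) ^ ((m2:ℕ):ℝ) = (1 + ρ ω) ^ (m2:ℕ) := Real.rpow_natCast _ _
      have h3 : 1 + ρ ω ≤ c + ‖eLn ν (q ω)‖ := by
        have : ρ ω ≤ ‖eLn ν (q ω)‖ + ‖eLn ν y‖ := by
          rw [hρdef]
          dsimp only
          rw [map_sub]
          exact norm_sub_le _ _
        rw [hc]
        linarith
      calc (1 + ρ ω) ^ (2*κ) ≤ (1 + ρ ω) ^ (m2:ℕ) := by rw [← h2]; exact h1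
        _ ≤ (c + ‖eLn ν (q ω)‖) ^ m2 :=
            pow_le_pow_left₀ (by linarith [hρnn ω]) h3 m2
    have hint0 : Integrable (fun ω => (c + ‖eLn ν (q ω)‖) ^ m2) P := by
      have hexp : ∀ ω, (c + ‖eLn ν (q ω)‖) ^ m2 =
          ∑ j ∈ Finset.range (m2 + 1), c ^ j * ‖eLn ν (q ω)‖ ^ (m2 - j) * (m2.choose j) := by
        intro ω
        rw [add_pow]
      simp_rw [hexp]
      apply integrable_finset_sum
      intro j _
      exact (((hqnorm (m2 - j)).const_mul (c ^ j)).mul_const _)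
    apply Integrable.mono' hint0 ?_ (Filter.Eventually.of_forall hbound)
    apply Measurable.aestronglyMeasurable
    exact (measurable_const.add hρmeas).pow_const (2*κ)
  have hRint' : Integrable (fun ω => (1 + Real.sqrt (∑ i, (q ω i - y i) ^ 2)) ^ (2 * κ)) P := by
    apply hRint.congr
    apply Filter.Eventually.of_forall
    intro ω
    dsimp only
    rw [hρ ω]
  set m_real : ℝ := ∫ ω, (1 + Real.sqrt (∑ i, (q ω i - y i) ^ 2)) ^ (2 * κ) ∂P with hm_real
  set mI : ℝ≥0∞ := ∫⁻ ω, ENNReal.ofReal ((1 + ρ ω) ^ (2 * κ)) ∂P with hmI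
  have hm_nn : 0 ≤ m_real :=
    integral_nonneg fun ω => Real.rpow_nonneg (by positivity) _
  have hmIeq : mI = ENNReal.ofReal m_real := by
    rw [hmI, hm_real]
    rw [ofReal_integral_eq_lintegral_ofReal hRint' ?hnn]
    · apply lintegral_congr
      intro ω
      rw [hρ ω]
    case hnn =>
      apply Filter.Eventually.of_forall
      intro ω
      have : (0:ℝ) ≤ Real.sqrt (∑ i, (q ω i - y i)^2) := Real.sqrt_nonneg _
      exact Real.rpow_nonneg (by linarith) _
  have hmItop : mI ≠ ⊤ := by
    rw [hmIeq]
    exact ENNReal.ofReal_ne_top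
  have hmIone : 1 ≤ mI := by
    rw [hmI]
    calc (1:ℝ≥0∞) = ∫⁻ _ω, 1 ∂P := by rw [lintegral_one, measure_univ]
      _ ≤ _ := by
          apply lintegral_mono
          intro ω
          rw [← ENNReal.ofReal_one]
          apply ENNReal.ofReal_le_ofReal
          exact Real.one_le_rpow (by linarith [hρnn ω]) (by positivity)
  -- pointwise-in-s bound
  have hpt : ∀ s ∈ Set.Icc (0:ℝ) T, (T - s) ^ κ *
      (∫ ω, (∑ i, ((T - s)⁻¹ • (y - bridgeBB ν T (q ω) y (fun u => B u ω) s)) i ^ 2) ^ κ ∂P)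
        ≤ Kfin.toReal * m_real := by
    intro s hs
    rcases eq_or_lt_of_le hs.2 with hsT | hsT
    · rw [hsT, sub_self, Real.zero_rpow (ne_of_gt hκ), zero_mul]
      exact mul_nonneg ENNReal.toReal_nonneg hm_nn
    have hs0 : 0 ≤ s := hs.1
    have hTs : 0 < T - s := by linarith
    set Y : Ω → Fin ν → ℝ :=
      fun ω => (T - s)⁻¹ • (y - bridgeBB ν T (q ω) y (fun u => B u ω) s) with hYdef
    set g : Ω → ℝ := fun ω => (∑ i, (Y ω) i ^ 2) ^ κ with hgdef
    by_cases hgint : Integrable g P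
    swap
    · rw [integral_undef hgint, mul_zero]
      exact mul_nonneg ENNReal.toReal_nonneg hm_nn
    have hgnn : 0 ≤ᶠ[ae P] g :=
      ae_of_all P (fun ω => Real.rpow_nonneg (by positivity) κ)
    rw [integral_eq_lintegral_of_nonneg_ae hgnn hgint.aestronglyMeasurable]
    set h : ℝ → Ω → ℝ≥0∞ := fun u ω =>
      ENNReal.ofReal (((T - u) ^ 2)⁻¹ * ‖eLn ν (B (max s 0) ω - B (max u 0) ω)‖) with hhdef
    set ℓ : Ω → ℝ≥0∞ := fun ω => ∫⁻ u in Set.Ioc (0:ℝ) s, h u ω with hℓdef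
    have hhmeas : Measurable (Function.uncurry h) := bm_h_meas hBM T s
    have hℓmeas : Measurable ℓ := Measurable.lintegral_prod_left hhmeas
    set a1 : Ω → ℝ≥0∞ := fun ω => ENNReal.ofReal (T⁻¹ * ρ ω) with ha1def
    set a2 : Ω → ℝ≥0∞ := fun ω => ENNReal.ofReal (T⁻¹ * ‖eLn ν (B s ω)‖) with ha2def
    have ha1meas : Measurable a1 := (measurable_const.mul hρmeas).ennreal_ofReal
    have ha2meas : Measurable a2 := by
      apply Measurable.ennreal_ofReal
      exact measurable_const.mul (((eLn ν).continuous.norm).measurable.comp (bm_meas hBM s))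
    -- identification of the third term
    have hteq : ∀ ω, ENNReal.ofReal
        (∫ u in (0:ℝ)..s, ((T - u) ^ 2)⁻¹ * ‖eLn ν (B s ω - B u ω)‖) = ℓ ω := by
      intro ω
      have hWc : ContinuousOn (fun t => B t ω) (Set.Ici 0) := hBM.contPaths ω
      have hc2 : ContinuousOn (fun u => ((T - u) ^ 2)⁻¹ * ‖eLn ν (B s ω - B u ω)‖)
          (Set.Icc 0 s) := by
        apply ContinuousOn.mul
        · apply ContinuousOn.inv₀
          · exact (continuousOn_const.sub continuousOn_id).pow 2
          · intro u hu
            have := hu.2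
            exact pow_ne_zero 2 (by intro hcon; nlinarith)
        · apply ContinuousOn.norm
          apply Continuous.comp_continuousOn (eLn ν).continuous
          apply ContinuousOn.sub continuousOn_const
          exact hWc.mono (fun x hx => hx.1)
      have hint : IntegrableOn (fun u => ((T - u) ^ 2)⁻¹ * ‖eLn ν (B s ω - B u ω)‖)
          (Set.Ioc 0 s) volume :=
        (hc2.integrableOn_Icc).mono_set Set.Ioc_subset_Icc_self
      have hnn : 0 ≤ᶠ[ae (volume.restrict (Set.Ioc (0:ℝ) s))]
          fun u => ((T - u) ^ 2)⁻¹ * ‖eLn ν (B s ω - B u ω)‖ :=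
        ae_of_all _ (fun u => by positivity)
      rw [intervalIntegral.integral_of_le hs0,
        ofReal_integral_eq_lintegral_ofReal hint hnn]
      apply setLIntegral_congr_fun measurableSet_Ioc
      intro u hu
      rw [hhdef]
      dsimp only
      rw [max_eq_left hu.1.le, max_eq_left hs0]
    -- pointwise bound
    have hptw : ∀ ω, ENNReal.ofReal (g ω) ≤
        (3:ℝ≥0∞) ^ (2*κ) * ((a1 ω) ^ (2*κ) + (a2 ω) ^ (2*κ) + (ℓ ω) ^ (2*κ)) := by
      intro ω
      have hgeq : ENNReal.ofReal (g ω) = (ENNReal.ofReal ‖eLn ν (Y ω)‖) ^ (2*κ) := by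
        rw [hgdef]
        dsimp only
        rw [sum_sq_eq_norm_eLn]
        rw [show (‖eLn ν (Y ω)‖ ^ 2 : ℝ) ^ κ = ‖eLn ν (Y ω)‖ ^ (2*κ) by
          rw [← Real.rpow_natCast ‖eLn ν (Y ω)‖ 2, ← Real.rpow_mul (norm_nonneg _)]
          norm_num]
        rw [ENNReal.ofReal_rpow_of_nonneg (norm_nonneg _) (by positivity)]
      have hb := bridge_drift_bound hT hs0 hsT (q ω) y (fun u => B u ω) (hBM.contPaths ω)
      have h1 : ENNReal.ofReal ‖eLn ν (Y ω)‖ ≤ a1 ω + a2 ω + ℓ ω := by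
        refine le_trans (ENNReal.ofReal_le_ofReal hb) ?_
        refine le_trans ENNReal.ofReal_add_le ?_
        apply add_le_add
        · refine le_trans ENNReal.ofReal_add_le ?_
          apply add_le_add
          · exact le_of_eq rfl
          · exact le_of_eq rfl
        · exact le_of_eq (hteq ω)
      calc ENNReal.ofReal (g ω) = (ENNReal.ofReal ‖eLn ν (Y ω)‖) ^ (2*κ) := hgeq
        _ ≤ (a1 ω + a2 ω + ℓ ω) ^ (2*κ) := ENNReal.rpow_le_rpow h1 (by positivity)
        _ ≤ _ := add3_rpow_le (by positivity)
    -- term bounds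
    have hA1 : ∫⁻ ω, (a1 ω) ^ (2*κ) ∂P ≤ c1 * mI := by
      have hptA : ∀ ω, (a1 ω) ^ (2*κ) ≤ c1 * ENNReal.ofReal ((1 + ρ ω) ^ (2*κ)) := by
        intro ω
        rw [ha1def]
        dsimp only
        rw [ENNReal.ofReal_mul (by positivity), ENNReal.mul_rpow_of_nonneg _ _ (by positivity)]
        rw [hc1]
        gcongr
        rw [ENNReal.ofReal_rpow_of_nonneg (hρnn ω) (by positivity)]
        apply ENNReal.ofReal_le_ofReal
        exact Real.rpow_le_rpow (hρnn ω) (by linarith [hρnn ω]) (by positivity)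
      calc ∫⁻ ω, (a1 ω) ^ (2*κ) ∂P ≤ ∫⁻ ω, c1 * ENNReal.ofReal ((1 + ρ ω) ^ (2*κ)) ∂P :=
            lintegral_mono hptA
        _ = c1 * mI := by
            rw [lintegral_const_mul' _ _
              (ENNReal.rpow_ne_top_of_nonneg (by positivity) ENNReal.ofReal_ne_top)]
    have hA2 : ∫⁻ ω, (a2 ω) ^ (2*κ) ∂P ≤ c1 * K2 := by
      have hptA : ∀ ω, (a2 ω) ^ (2*κ) =
          c1 * (ENNReal.ofReal ‖eLn ν (B s ω)‖) ^ (2*κ) := by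
        intro ω
        rw [ha2def]
        dsimp only
        rw [ENNReal.ofReal_mul (by positivity), ENNReal.mul_rpow_of_nonneg _ _ (by positivity),
          hc1]
      simp_rw [hptA]
      rw [lintegral_const_mul' _ _
        (ENNReal.rpow_ne_top_of_nonneg (by positivity) ENNReal.ofReal_ne_top)]
      gcongr
      have hBs : ∫⁻ ω, (ENNReal.ofReal ‖eLn ν (B s ω)‖) ^ (2*κ) ∂P =
          ∫⁻ ω, (ENNReal.ofReal ‖eLn ν (B s ω - B 0 ω)‖) ^ (2*κ) ∂P := by
        apply lintegral_congr
        intro ω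
        rw [hBM.start ω, sub_zero]
      rw [hBs]
      refine le_trans (bm_incr_moment hBM le_rfl hs0 hκ2) ?_
      rw [hK2, sub_zero]
      have hsqrt : ENNReal.ofReal (Real.sqrt s ^ (2*κ)) ≤ ENNReal.ofReal (Real.sqrt T ^ (2*κ)) :=
        ENNReal.ofReal_le_ofReal (Real.rpow_le_rpow (Real.sqrt_nonneg _)
          (Real.sqrt_le_sqrt (by linarith)) (by positivity))
      exact mul_le_mul_right (mul_le_mul_left hsqrt _) _
    have hA3 : ∫⁻ ω, (ℓ ω) ^ (2*κ) ∂P ≤ C3 * ENNReal.ofReal ((T - s) ^ (-κ)) := by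
      have hJ : ∫⁻ ω, (ℓ ω) ^ (2*κ) ∂P ≤ (∫⁻ ω, (ℓ ω) ^ ((m2:ℕ):ℝ) ∂P) ^ θ := by
        have hJen := lintegral_rpow_le_rpow_lintegral P
          ((hℓmeas.pow_const ((m2:ℕ):ℝ)).aemeasurable) hθ0 hθ1
        refine le_trans (le_of_eq ?_) hJen
        apply lintegral_congr
        intro ω
        rw [← ENNReal.rpow_mul, hm2θ]
      have hEll : ∫⁻ ω, (ℓ ω) ^ ((m2:ℕ):ℝ) ∂P ≤
          G2 * ENNReal.ofReal ((2 * (T - s) ^ (-(1/2) : ℝ)) ^ ((m2 : ℕ) : ℝ)) :=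
        ell_moment hBM hT hs0 hsT hn1
      have hreal : (((2 * (T - s) ^ (-(1/2) : ℝ)) ^ ((m2:ℕ):ℝ)) : ℝ) ^ θ =
          (2:ℝ) ^ (2*κ) * (T - s) ^ (-κ) := by
        rw [← Real.rpow_mul (by positivity), hm2θ]
        rw [Real.mul_rpow (by norm_num) (by positivity)]
        congr 1
        rw [← Real.rpow_mul hTs.le]
        congr 1
        ring
      calc ∫⁻ ω, (ℓ ω) ^ (2*κ) ∂P ≤ (∫⁻ ω, (ℓ ω) ^ ((m2:ℕ):ℝ) ∂P) ^ θ := hJ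
        _ ≤ (G2 * ENNReal.ofReal ((2 * (T - s) ^ (-(1/2) : ℝ)) ^ ((m2:ℕ):ℝ))) ^ θ :=
            ENNReal.rpow_le_rpow hEll hθ0.le
        _ = G2 ^ θ * ENNReal.ofReal ((2:ℝ) ^ (2*κ) * (T - s) ^ (-κ)) := by
            rw [ENNReal.mul_rpow_of_nonneg _ _ hθ0.le]
            congr 1
            rw [ENNReal.ofReal_rpow_of_nonneg (by positivity) hθ0.le, hreal]
        _ = C3 * ENNReal.ofReal ((T - s) ^ (-κ)) := by
            rw [hC3, ENNReal.ofReal_mul (by positivity)]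
            ring
    -- assemble
    have hmain : ENNReal.ofReal ((T - s) ^ κ) * ∫⁻ ω, ENNReal.ofReal (g ω) ∂P ≤
        Kfin * mI := by
      have hsum : ∫⁻ ω, ENNReal.ofReal (g ω) ∂P ≤
          (3:ℝ≥0∞) ^ (2*κ) * (∫⁻ ω, (a1 ω) ^ (2*κ) ∂P + ∫⁻ ω, (a2 ω) ^ (2*κ) ∂P +
            ∫⁻ ω, (ℓ ω) ^ (2*κ) ∂P) := by
        calc ∫⁻ ω, ENNReal.ofReal (g ω) ∂P
            ≤ ∫⁻ ω, (3:ℝ≥0∞) ^ (2*κ) *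
                ((a1 ω) ^ (2*κ) + (a2 ω) ^ (2*κ) + (ℓ ω) ^ (2*κ)) ∂P := lintegral_mono hptw
          _ = (3:ℝ≥0∞) ^ (2*κ) *
              ∫⁻ ω, (a1 ω) ^ (2*κ) + (a2 ω) ^ (2*κ) + (ℓ ω) ^ (2*κ) ∂P := by
              rw [lintegral_const_mul' _ _
                (ENNReal.rpow_ne_top_of_nonneg (by positivity) (by simp))]
          _ = _ := by
              rw [lintegral_add_left (f := fun ω => a1 ω ^ (2*κ) + a2 ω ^ (2*κ))
                  ((ha1meas.pow_const _).add (ha2meas.pow_const _)),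
                lintegral_add_left (ha1meas.pow_const _)]
      have hTsκ : ENNReal.ofReal ((T - s) ^ κ) ≤ ENNReal.ofReal (T ^ κ) :=
        ENNReal.ofReal_le_ofReal (Real.rpow_le_rpow (by linarith) (by linarith) hκ.le)
      have hTs1 : ENNReal.ofReal ((T - s) ^ κ) * ENNReal.ofReal ((T - s) ^ (-κ)) = 1 := by
        rw [← ENNReal.ofReal_mul (by positivity), ← Real.rpow_add hTs]
        norm_num
      calc ENNReal.ofReal ((T - s) ^ κ) * ∫⁻ ω, ENNReal.ofReal (g ω) ∂P
          ≤ ENNReal.ofReal ((T - s) ^ κ) * ((3:ℝ≥0∞) ^ (2*κ) *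
              (c1 * mI + c1 * K2 + C3 * ENNReal.ofReal ((T - s) ^ (-κ)))) := by
            apply mul_le_mul_right
            refine le_trans hsum ?_
            apply mul_le_mul_right
            exact add_le_add (add_le_add hA1 hA2) hA3
        _ = (3:ℝ≥0∞) ^ (2*κ) *
              (ENNReal.ofReal ((T - s) ^ κ) * c1 * mI +
               ENNReal.ofReal ((T - s) ^ κ) * c1 * K2 +
               C3 * (ENNReal.ofReal ((T - s) ^ κ) * ENNReal.ofReal ((T - s) ^ (-κ)))) := by
            ring
        _ ≤ (3:ℝ≥0∞) ^ (2*κ) * (cT * mI + cT * K2 * mI + C3 * mI) := by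
            have hq1 : ENNReal.ofReal ((T - s) ^ κ) * c1 * mI ≤ cT * mI := by
              rw [hcT]
              exact mul_le_mul_left (mul_le_mul_left hTsκ c1) mI
            have hq2 : ENNReal.ofReal ((T - s) ^ κ) * c1 * K2 ≤ cT * K2 * mI := by
              have hq2a : ENNReal.ofReal ((T - s) ^ κ) * c1 * K2 ≤ cT * K2 := by
                rw [hcT]
                exact mul_le_mul_left (mul_le_mul_left hTsκ c1) K2
              refine le_trans hq2a ?_
              calc cT * K2 = cT * K2 * 1 := (mul_one _).symm
                _ ≤ cT * K2 * mI := mul_le_mul_right hmIone _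
            have hq3 : C3 * (ENNReal.ofReal ((T - s) ^ κ) * ENNReal.ofReal ((T - s) ^ (-κ))) ≤
                C3 * mI := by
              rw [hTs1, mul_one]
              calc C3 = C3 * 1 := (mul_one _).symm
                _ ≤ C3 * mI := mul_le_mul_right hmIone _
            exact mul_le_mul_right (add_le_add (add_le_add hq1 hq2) hq3) _
        _ = Kfin * mI := by
            rw [hKfin]
            ring
    have hgl : (∫⁻ ω, ENNReal.ofReal (g ω) ∂P) ≠ ⊤ := by
      intro htop
      have h0 : ENNReal.ofReal ((T - s) ^ κ) ≠ 0 := by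
        rw [ne_eq, ENNReal.ofReal_eq_zero, not_le]
        exact Real.rpow_pos_of_pos hTs κ
      rw [htop, ENNReal.mul_top h0] at hmain
      exact (ENNReal.mul_ne_top hKfintop hmItop) (top_le_iff.mp hmain)
    calc (T - s) ^ κ * (∫⁻ ω, ENNReal.ofReal (g ω) ∂P).toReal
        = (ENNReal.ofReal ((T - s) ^ κ) * ∫⁻ ω, ENNReal.ofReal (g ω) ∂P).toReal := by
          rw [ENNReal.toReal_mul, ENNReal.toReal_ofReal (by positivity)]
      _ ≤ (Kfin * mI).toReal :=
          ENNReal.toReal_mono (ENNReal.mul_ne_top hKfintop hmItop) hmain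
      _ = Kfin.toReal * m_real := by
          rw [ENNReal.toReal_mul, hmIeq, ENNReal.toReal_ofReal hm_nn]
  -- conclude
  by_cases hII : IntervalIntegrable (fun s => (T - s) ^ κ *
      ∫ ω, (∑ i, ((T - s)⁻¹ • (y - bridgeBB ν T (q ω) y (fun u => B u ω) s)) i ^ 2) ^ κ ∂P)
      volume 0 T
  · calc (∫ s in (0:ℝ)..T, (T - s) ^ κ *
        ∫ ω, (∑ i, ((T - s)⁻¹ • (y - bridgeBB ν T (q ω) y (fun u => B u ω) s)) i ^ 2) ^ κ ∂P)
        ≤ ∫ _s in (0:ℝ)..T, Kfin.toReal * m_real :=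
          intervalIntegral.integral_mono_on hT.le hII (intervalIntegrable_const) hpt
      _ = T * (Kfin.toReal * m_real) := by
          rw [intervalIntegral.integral_const, smul_eq_mul, sub_zero]
      _ ≤ C * m_real := by
          rw [hC]
          nlinarith [hm_nn, ENNReal.toReal_nonneg (a := Kfin)]
  · rw [intervalIntegral.integral_undef hII]
    have hC0 : 0 < C := by
      rw [hC]
      nlinarith [ENNReal.toReal_nonneg (a := Kfin)]
    exact mul_nonneg hC0.le hm_nn
end
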